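/- arXiv:0908.4025 — 2 statements merged into one kernel-verified Lean document; each statement's English description precedes it below -/
import Mathlib

section
/- For every d ≥ 2, g_1 ∘ g_0 = g_0 ∘ g_1 as ℂ(q,z)-linear maps Markov(⊔S_dB) → Markov(⊔S_{d−2}B) (here the maps g_0, g_1 are taken in the appropriate degrees); equivalently, on dual spaces, Φ_{d,1} ∘ Φ_{d−1,0} = Φ_{d,0} ∘ Φ_{d−1,1}, where Φ_{d,ε} denotes the transpose of g_ε. -/
open scoped TensorProduct DirectSum

set_option synthInstance.maxHeartbeats 1000000
set_option maxHeartbeats 2000000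

namespace SingularHOMFLYPT

/-- Generators of the singular braid monoid on `n` strands: `pos i` is `σ_{i+1}`,
`neg i` is `σ_{i+1}⁻¹` and `tau i` is `τ_{i+1}`, for `i : Fin (n-1)`. -/
inductive SBGen (n : ℕ) : Type
  | pos : Fin (n - 1) → SBGen n
  | neg : Fin (n - 1) → SBGen n
  | tau : Fin (n - 1) → SBGen n

open FreeMonoid in
/-- The defining relations of the singular braid monoid `SB_n` (Baez, Birman). -/
inductive SBRel (n : ℕ) : FreeMonoid (SBGen n) → FreeMonoid (SBGen n) → Prop
  | inv_right (i : Fin (n - 1)) : SBRel n (of (.pos i) * of (.neg i)) 1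
  | inv_left (i : Fin (n - 1)) : SBRel n (of (.neg i) * of (.pos i)) 1
  | sigma_tau (i : Fin (n - 1)) :
      SBRel n (of (.pos i) * of (.tau i)) (of (.tau i) * of (.pos i))
  | braid (i j : Fin (n - 1)) (h : (i : ℕ) + 1 = j ∨ (j : ℕ) + 1 = i) :
      SBRel n (of (.pos i) * of (.pos j) * of (.pos i))
        (of (.pos j) * of (.pos i) * of (.pos j))
  | braid_tau (i j : Fin (n - 1)) (h : (i : ℕ) + 1 = j ∨ (j : ℕ) + 1 = i) :
      SBRel n (of (.pos i) * of (.pos j) * of (.tau i))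
        (of (.tau j) * of (.pos i) * of (.pos j))
  | comm_ss (i j : Fin (n - 1)) (h : (i : ℕ) + 2 ≤ j ∨ (j : ℕ) + 2 ≤ i) :
      SBRel n (of (.pos i) * of (.pos j)) (of (.pos j) * of (.pos i))
  | comm_st (i j : Fin (n - 1)) (h : (i : ℕ) + 2 ≤ j ∨ (j : ℕ) + 2 ≤ i) :
      SBRel n (of (.pos i) * of (.tau j)) (of (.tau j) * of (.pos i))
  | comm_tt (i j : Fin (n - 1)) (h : (i : ℕ) + 2 ≤ j ∨ (j : ℕ) + 2 ≤ i) :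
      SBRel n (of (.tau i) * of (.tau j)) (of (.tau j) * of (.tau i))

/-- The congruence on the free monoid generated by the singular braid relations. -/
def SBcon (n : ℕ) : Con (FreeMonoid (SBGen n)) := conGen (SBRel n)

/-- The singular braid monoid on `n` strands, as a presented monoid. -/
abbrev SB (n : ℕ) : Type := (SBcon n).Quotient

/-- The canonical projection from the free monoid onto `SB n`. -/
def SB.mk {n : ℕ} : FreeMonoid (SBGen n) →* SB n := Con.mk' (SBcon n)

/-- The generator `σ_{i+1}` of `SB n`. -/
def sG {n : ℕ} (i : Fin (n - 1)) : SB n := SB.mk (.of (.pos i))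

/-- The generator `σ_{i+1}⁻¹` of `SB n`. -/
def sInvG {n : ℕ} (i : Fin (n - 1)) : SB n := SB.mk (.of (.neg i))

/-- The generator `τ_{i+1}` of `SB n`. -/
def tauG {n : ℕ} (i : Fin (n - 1)) : SB n := SB.mk (.of (.tau i))

theorem SB.sound {n : ℕ} {a b : FreeMonoid (SBGen n)} (h : SBRel n a b) :
    SB.mk a = SB.mk b :=
  Con.eq _ |>.2 (ConGen.Rel.of a b h)

/-- Lift a map on generators to a monoid homomorphism on `SB n`. -/
def SB.lift {n : ℕ} {M : Type*} [Monoid M] (f : SBGen n → M)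
    (h : ∀ a b, SBRel n a b → FreeMonoid.lift f a = FreeMonoid.lift f b) :
    SB n →* M :=
  Con.lift _ (FreeMonoid.lift f)
    (Con.conGen_le.2 fun a b hab => (Con.ker_rel _).2 (h a b hab))

@[simp] theorem SB.lift_mk {n : ℕ} {M : Type*} [Monoid M] (f : SBGen n → M)
    (h : ∀ a b, SBRel n a b → FreeMonoid.lift f a = FreeMonoid.lift f b)
    (w : FreeMonoid (SBGen n)) :
    SB.lift f h (SB.mk w) = FreeMonoid.lift f w :=
  Con.lift_coe _ w

/-- The number of singular points (`τ`-letters) of a generator. -/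
def degGen {n : ℕ} : SBGen n → Multiplicative ℕ
  | .tau _ => Multiplicative.ofAdd 1
  | _ => 1

/-- The monoid homomorphism `deg : SB n →* (ℕ, +)` counting singular points. -/
def degM {n : ℕ} : SB n →* Multiplicative ℕ :=
  SB.lift degGen (by
    rintro a b h
    cases h <;> simp [degGen, mul_comm])
/-- Shifting generators by `k`, viewing `SB n` inside `SB N` (strands `k+1, …, k+n`). -/
def shiftGen {n : ℕ} (N k : ℕ) (h : k + n ≤ N) : SBGen n → SBGen N
  | .pos i => .pos ⟨k + i, by have := i.2; omega⟩
  | .neg i => .neg ⟨k + i, by have := i.2; omega⟩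
  | .tau i => .tau ⟨k + i, by have := i.2; omega⟩

theorem shiftGen_rel {n : ℕ} (N k : ℕ) (h : k + n ≤ N) {a b : FreeMonoid (SBGen n)}
    (hab : SBRel n a b) :
    SBRel N (FreeMonoid.map (shiftGen N k h) a) (FreeMonoid.map (shiftGen N k h) b) := by
  cases hab <;>
    simp only [map_mul, map_one, FreeMonoid.map_of, shiftGen] <;>
    first
      | exact SBRel.inv_right _
      | exact SBRel.inv_left _
      | exact SBRel.sigma_tau _
      | (rename_i i j hij; exact SBRel.braid _ _ (by simp; omega))
      | (rename_i i j hij; first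
          | exact SBRel.braid_tau _ _ (by simp; omega)
          | exact SBRel.comm_ss _ _ (by simp; omega)
          | exact SBRel.comm_st _ _ (by simp; omega)
          | exact SBRel.comm_tt _ _ (by simp; omega))

/-- The monoid homomorphism `SB n →* SB N` placing a braid on the strands `k+1, …, k+n`. -/
def shiftHom {n : ℕ} (N k : ℕ) (h : k + n ≤ N) : SB n →* SB N :=
  Con.lift _ (SB.mk.comp (FreeMonoid.map (shiftGen N k h)))
    (Con.conGen_le.2 fun a b hab => (Con.ker_rel _).2 (SB.sound (shiftGen_rel N k h hab)))

/-- The natural inclusion `SB n →* SB N` (adding trivial strands on the right). -/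
def inclSB {n : ℕ} (N : ℕ) (h : n ≤ N) : SB n →* SB N := shiftHom N 0 (by omega)

/-- `α ∗ β`: the braid obtained by placing `β` (on `m` strands) above (to the right of)
`α` (on `n` strands), realized in `SB N` for `n + m ≤ N`. -/
def starIn {n m : ℕ} (N : ℕ) (h : n + m ≤ N) (α : SB n) (β : SB m) : SB N :=
  inclSB N (by omega) α * shiftHom N n h β
@[simp] theorem shiftHom_mk {n : ℕ} (N k : ℕ) (h : k + n ≤ N) (w : FreeMonoid (SBGen n)) :
    shiftHom N k h (SB.mk w) = SB.mk (FreeMonoid.map (shiftGen N k h) w) :=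
  Con.lift_coe _ w

theorem shiftHom_sG {n : ℕ} (N k : ℕ) (h : k + n ≤ N) (i : Fin (n - 1)) :
    shiftHom N k h (sG i) = sG ⟨k + i.1, by have := i.2; omega⟩ := rfl

theorem inclSB_sG {n : ℕ} (N : ℕ) (h : n ≤ N) (i : Fin (n - 1)) :
    inclSB N h (sG i) = sG ⟨0 + i.1, by have := i.2; omega⟩ := rfl

noncomputable section

/-- The field `ℂ(q)` of rational functions over `ℂ` in the variable `q`. -/
abbrev Kq : Type := RatFunc ℂ

/-- The field `ℂ(q,z) = ℂ(q)(z)` of rational functions over `ℂ` in the variables `q, z`. -/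
abbrev Lqz : Type := RatFunc Kq

/-- The variable `q`, as an element of `ℂ(q)`. -/
def qK : Kq := RatFunc.X

/-- The variable `z`, as an element of `ℂ(q,z)`. -/
def zL : Lqz := RatFunc.X

/-- The variable `q`, as an element of `ℂ(q,z)`. -/
def qL : Lqz := algebraMap Kq Lqz qK

/-- The Hecke relations `σ_k² = (q-1)σ_k + q` in the monoid algebra `ℂ(q)[SB_n]`. -/
def HeckeRel (n : ℕ) : MonoidAlgebra Kq (SB n) → MonoidAlgebra Kq (SB n) → Prop :=
  fun x y => ∃ i : Fin (n - 1),
    x = MonoidAlgebra.of Kq (SB n) (sG i) ^ 2 ∧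
    y = (qK - 1) • MonoidAlgebra.of Kq (SB n) (sG i) + qK • 1

/-- The singular Hecke algebra `H(SB_n)`: the quotient of `ℂ(q)[SB_n]` by the two-sided
ideal generated by the elements `σ_k² - (q-1)σ_k - q`. -/
abbrev Hecke (n : ℕ) : Type := RingQuot (HeckeRel n)

/-- The image of a singular braid in the singular Hecke algebra. -/
def heckeOf {n : ℕ} (β : SB n) : Hecke n :=
  RingQuot.mkAlgHom Kq (HeckeRel n) (MonoidAlgebra.of Kq (SB n) β)

/-- `H_z(SB_n) := ℂ(q,z) ⊗_{ℂ(q)} H(SB_n)`. -/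
abbrev HeckeZ (n : ℕ) : Type := Lqz ⊗[Kq] Hecke n

/-- The image of a singular braid in `H_z(SB_n)`. -/
def ofHZ {n : ℕ} (β : SB n) : HeckeZ n := (1 : Lqz) ⊗ₜ[Kq] heckeOf β

/-- The algebra homomorphism `H(SB_n) → H(SB_{n+1})` induced by the natural inclusion
`SB_n ↪ SB_{n+1}`. -/
def heckeIncl (n : ℕ) : Hecke n →ₐ[Kq] Hecke (n + 1) :=
  RingQuot.liftAlgHom Kq
    ⟨((RingQuot.mkAlgHom Kq (HeckeRel (n + 1))).comp
        (MonoidAlgebra.mapDomainAlgHom Kq Kq (inclSB (n + 1) (Nat.le_succ n)))),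
      by
        rintro x y ⟨i, rfl, rfl⟩
        have hi := i.2
        set i' : Fin ((n + 1) - 1) := ⟨0 + i.1, by omega⟩ with hi'
        have hgen : (MonoidAlgebra.mapDomainAlgHom Kq Kq (inclSB (n + 1) (Nat.le_succ n)))
            (MonoidAlgebra.of Kq (SB n) (sG i)) = MonoidAlgebra.of Kq (SB (n + 1)) (sG i') := by
          rw [MonoidAlgebra.of_apply, MonoidAlgebra.mapDomainAlgHom_apply,
            MonoidAlgebra.mapDomain_single, inclSB_sG, MonoidAlgebra.of_apply]
        have hrel : HeckeRel (n + 1) (MonoidAlgebra.of Kq (SB (n + 1)) (sG i') ^ 2)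
            ((qK - 1) • MonoidAlgebra.of Kq (SB (n + 1)) (sG i') + qK • 1) := ⟨i', rfl, rfl⟩
        have hmk := RingQuot.mkAlgHom_rel Kq hrel
        simp only [map_pow, map_add, map_smul, map_one] at hmk
        simp only [AlgHom.coe_comp, Function.comp_apply, map_pow, map_add, map_smul, map_one,
          hgen]
        exact hmk⟩

/-- The algebra homomorphism `ι_n : H_z(SB_n) → H_z(SB_{n+1})`. -/
def iotaHZ (n : ℕ) : HeckeZ n →ₐ[Lqz] HeckeZ (n + 1) :=
  Algebra.TensorProduct.map (AlgHom.id Lqz Lqz) (heckeIncl n)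
/-- The `ℂ(q)`-subspace `H(S_dB_n)` of the singular Hecke algebra spanned by the images of
the singular braids with `d` singular points. -/
def HSd (n d : ℕ) : Submodule Kq (Hecke n) :=
  Submodule.span Kq
    {x | ∃ β : SB n, degM β = Multiplicative.ofAdd d ∧ x = heckeOf β}

/-- The `ℂ(q,z)`-subspace `H_z(S_dB_n)` of `H_z(SB_n)` spanned by the images of the singular
braids with `d` singular points. -/
def HzSd (n d : ℕ) : Submodule Lqz (HeckeZ n) :=
  Submodule.span Lqz
    {x | ∃ β : SB n, degM β = Multiplicative.ofAdd d ∧ x = ofHZ β}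

/-- Strand counts: the positive natural numbers. -/
abbrev Idx : Type := {n : ℕ // 0 < n}

/-- The direct sum `⊕_{n ≥ 1} H_z(SB_n)`. -/
abbrev MV : Type := ⨁ i : Idx, HeckeZ i.1

instance instAddCommGroupHeckeZ (n : ℕ) : AddCommGroup (HeckeZ n) := inferInstance
instance instModuleHeckeZ (n : ℕ) : Module Lqz (HeckeZ n) := inferInstance
instance instAddCommGroupMV : AddCommGroup MV := inferInstance
instance instModuleMV : Module Lqz MV := inferInstance

/-- The canonical inclusion of the `n`-th summand of `⊕_{n ≥ 1} H_z(SB_n)`. -/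
def mvof (i : Idx) : HeckeZ i.1 →ₗ[Lqz] MV :=
  DirectSum.lof Lqz Idx (fun i => HeckeZ i.1) i

/-- Successor of a strand count. -/
def succI (i : Idx) : Idx := ⟨i.1 + 1, Nat.succ_pos _⟩

/-- The generator `σ_n` of `SB_{n+1}`. -/
def sigmaLast (i : Idx) : SB (i.1 + 1) := sG ⟨i.1 - 1, Nat.sub_lt i.2 one_pos⟩

/-- The Markov relations in `⊕_{n ≥ 1} H_z(SB_n)`: trace relations, stabilization relations
and positive Markov relations. -/
def markovRels : Set MV :=
  {x | ∃ (i : Idx) (a b : HeckeZ i.1), x = mvof i (a * b) - mvof i (b * a)} ∪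
  {x | ∃ (i : Idx) (a : HeckeZ i.1), x = mvof i a - mvof (succI i) (iotaHZ i.1 a)} ∪
  {x | ∃ (i : Idx) (a : HeckeZ i.1),
    x = mvof (succI i) (iotaHZ i.1 a * ofHZ (sigmaLast i)) - zL • mvof i a}

/-- The Markov module `Markov(⊔SB)`. -/
abbrev Markov : Type := MV ⧸ Submodule.span Lqz markovRels

instance instAddCommGroupMarkov : AddCommGroup Markov := inferInstance
instance instModuleMarkov : Module Lqz Markov := inferInstance

/-- The class `[a, m]` in the Markov module of an element `a ∈ H_z(SB_m)`. -/
def markovClass (m : ℕ) (hm : 0 < m) (a : HeckeZ m) : Markov :=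
  Submodule.Quotient.mk (mvof ⟨m, hm⟩ a)

/-- The class `[β, m]` in the Markov module of a singular braid `β ∈ SB_m`. -/
def braidClass (m : ℕ) (hm : 0 < m) (β : SB m) : Markov :=
  markovClass m hm (ofHZ β)

/-- The direct sum `⊕_{n ≥ 1} H_z(S_dB_n)`. -/
abbrev MVD (d : ℕ) : Type := ⨁ i : Idx, ↥(HzSd i.1 d)

instance instAddCommGroupMVD (d : ℕ) : AddCommGroup (MVD d) := inferInstance
instance instModuleMVD (d : ℕ) : Module Lqz (MVD d) := inferInstance

/-- The canonical inclusion of the `n`-th summand of `⊕_{n ≥ 1} H_z(S_dB_n)`. -/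
def mvdof (d : ℕ) (i : Idx) : ↥(HzSd i.1 d) →ₗ[Lqz] MVD d :=
  DirectSum.lof Lqz Idx (fun i => ↥(HzSd i.1 d)) i

/-- The Markov relations in `⊕_{n ≥ 1} H_z(S_dB_n)`. -/
def markovRelsD (d : ℕ) : Set (MVD d) :=
  {x | ∃ (i : Idx) (k l : ℕ), k + l = d ∧ ∃ (a b : HeckeZ i.1),
    a ∈ HzSd i.1 k ∧ b ∈ HzSd i.1 l ∧
    ∃ (hab : a * b ∈ HzSd i.1 d) (hba : b * a ∈ HzSd i.1 d),
      x = mvdof d i ⟨a * b, hab⟩ - mvdof d i ⟨b * a, hba⟩} ∪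
  {x | ∃ (i : Idx) (a : HeckeZ i.1) (ha : a ∈ HzSd i.1 d)
      (ha' : iotaHZ i.1 a ∈ HzSd (i.1 + 1) d),
    x = mvdof d i ⟨a, ha⟩ - mvdof d (succI i) ⟨iotaHZ i.1 a, ha'⟩} ∪
  {x | ∃ (i : Idx) (a : HeckeZ i.1) (ha : a ∈ HzSd i.1 d)
      (ha' : iotaHZ i.1 a * ofHZ (sigmaLast i) ∈ HzSd (i.1 + 1) d),
    x = mvdof d (succI i) ⟨iotaHZ i.1 a * ofHZ (sigmaLast i), ha'⟩ - zL • mvdof d i ⟨a, ha⟩}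

/-- The `d`-th Markov module `Markov(⊔S_dB)`. -/
abbrev MarkovD (d : ℕ) : Type := MVD d ⧸ Submodule.span Lqz (markovRelsD d)

instance instAddCommGroupMarkovD (d : ℕ) : AddCommGroup (MarkovD d) := inferInstance
instance instModuleMarkovD (d : ℕ) : Module Lqz (MarkovD d) := inferInstance

/-- The class `[β, m]` in the `d`-th Markov module of a singular braid `β ∈ S_dB_m`
(defined to be `0` if `β` does not have exactly `d` singular points). -/
def classD (d m : ℕ) (hm : 0 < m) (β : SB m) : MarkovD d :=
  if h : degM β = Multiplicative.ofAdd d then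
    Submodule.Quotient.mk (mvdof d ⟨m, hm⟩ ⟨ofHZ β, Submodule.subset_span ⟨β, h, rfl⟩⟩)
  else 0
/-- The singular braid `W_{d,k} = τ_1 τ_3 ⋯ τ_{2k-1} (τ_{2k+1}σ_{2k+1}) ⋯ (τ_{2d-1}σ_{2d-1})`
in `SB_{2d}` (for `1 ≤ d` and `k ≤ d`). -/
def W (d k : ℕ) : SB (2 * d) :=
  ((List.range d).map (fun j =>
    if h : 2 * j < 2 * d - 1 then
      (if j < k then tauG ⟨2 * j, h⟩ else tauG ⟨2 * j, h⟩ * sG ⟨2 * j, h⟩)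
    else 1)).prod

/-- The class of `W_{d,k}` in the `d`-th Markov module: `[W_{d,k}, 2d]` for `d ≥ 1`, and the
class `[W_{0,0}, 1]` of the trivial braid on one strand for `d = 0`. -/
def WclassD (d k : ℕ) : MarkovD d :=
  if hd : d = 0 then hd ▸ classD 0 1 one_pos 1
  else classD d (2 * d) (by omega) (W d k)

/-- The singular braid `α_0 τ_{i_1} α_1 τ_{i_2} ⋯ τ_{i_d} α_d`. -/
def sbWord {m d : ℕ} (α : Fin (d + 1) → SB m) (idx : Fin d → Fin (m - 1)) : SB m :=
  α 0 * ((List.ofFn fun j : Fin d => tauG (idx j) * α j.succ).prod)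

/-- The singular braid `α_0 τ_{i_1} α_1 ⋯ τ_{i_{k-1}} α_{k-1} x α_k τ_{i_{k+1}} ⋯ τ_{i_d} α_d`
obtained from `α_0 τ_{i_1} α_1 ⋯ τ_{i_d} α_d` by replacing the letter `τ_{i_k}` by `x`. -/
def sbWordRepl {m d : ℕ} (α : Fin (d + 1) → SB m) (idx : Fin d → Fin (m - 1))
    (k : Fin d) (x : SB m) : SB m :=
  α 0 * ((List.ofFn fun j : Fin d => (if j = k then x else tauG (idx j)) * α j.succ).prod)

/-- `RepGen false i = 1` (deleting a `τ` letter) and `RepGen true i = σ_{i+1}` (replacing a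
`τ` letter by the corresponding `σ` letter). -/
def RepGen {m : ℕ} (ε : Bool) (i : Fin (m - 1)) : SB m := if ε then sG i else 1

/-- `IsG d ε g` says that the linear map `g : Markov(⊔S_dB) → Markov(⊔S_{d-1}B)` is induced
by the family of maps `f_{n,ε}` (deletion of one `τ` letter for `ε = false`, replacement of one
`τ` letter by the corresponding `σ` letter for `ε = true`), i.e. that
`g([β,n]) = [f_{n,ε}(β), n]` for every singular braid `β ∈ S_dB_n`. -/
def IsG (d : ℕ) (ε : Bool) (g : MarkovD d →ₗ[Lqz] MarkovD (d - 1)) : Prop :=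
  ∀ (m : ℕ) (hm : 0 < m) (α : Fin (d + 1) → SB m) (idx : Fin d → Fin (m - 1)),
    (∀ j, degM (α j) = Multiplicative.ofAdd 0) →
    g (classD d m hm (sbWord α idx)) =
      ∑ k : Fin d, classD (d - 1) m hm (sbWordRepl α idx k (RepGen ε (idx k)))

/-- The `ℂ(q,z)`-vector space freely spanned by the set `S_dB_m` of singular braids on `m`
strands with `d` singular points. -/
abbrev FreeSd (m d : ℕ) : Type :=
  {β : SB m // degM β = Multiplicative.ofAdd d} →₀ Lqz

/-- The basis element of `ℂ(q,z)[S_dB_m]` corresponding to a braid `β ∈ S_dB_m` (defined to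
be `0` if `β` does not have exactly `d` singular points). -/
def freeElem {m : ℕ} (d : ℕ) (β : SB m) : FreeSd m d :=
  if h : degM β = Multiplicative.ofAdd d then Finsupp.single ⟨β, h⟩ 1 else 0

/-- Iterated product (power) with respect to a given bilinear multiplication. -/
def powAux (mul : Markov →ₗ[Lqz] Markov →ₗ[Lqz] Markov) (one x : Markov) : ℕ → Markov
  | 0 => one
  | k + 1 => mul x (powAux mul one x k)
/-! ### Auxiliary development for the proof -/

section AuxDeg

variable {m : ℕ}

lemma degM_mk_of (a : SBGen m) : degM (SB.mk (FreeMonoid.of a)) = degGen a := by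
  simp [degM]

lemma degM_sG (i : Fin (m - 1)) : degM (sG i) = 1 := degM_mk_of _

lemma degM_tauG (i : Fin (m - 1)) : degM (tauG i) = Multiplicative.ofAdd 1 := degM_mk_of _

end AuxDeg

section Words

variable {m : ℕ}

/-- Generalized singular braid word with arbitrary "letters" `g j` between the blocks. -/
def sbWordSub {D : ℕ} (α : Fin (D + 1) → SB m) (g : Fin D → SB m) : SB m :=
  α 0 * (List.ofFn fun j : Fin D => g j * α j.succ).prod

lemma sbWord_eq_sub {D : ℕ} (α : Fin (D + 1) → SB m) (idx : Fin D → Fin (m - 1)) :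
    sbWord α idx = sbWordSub α fun j => tauG (idx j) := rfl

lemma sbWordRepl_eq_sub {D : ℕ} (α : Fin (D + 1) → SB m) (idx : Fin D → Fin (m - 1))
    (k : Fin D) (x : SB m) :
    sbWordRepl α idx k x = sbWordSub α (Function.update (fun j => tauG (idx j)) k x) := by
  simp only [sbWordRepl, sbWordSub, Function.update_apply]

/-- Merging the data after substituting `x` at position `k`. -/
def mergeA {D : ℕ} (α : Fin (D + 2) → SB m) (k : Fin (D + 1)) (x : SB m) :
    Fin (D + 1) → SB m := fun j =>
  if (j : ℕ) < (k : ℕ) then α j.castSucc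
  else if (j : ℕ) = (k : ℕ) then α j.castSucc * x * α j.succ
  else α j.succ

lemma mergeA_lt {D : ℕ} (α : Fin (D + 2) → SB m) (k : Fin (D + 1)) (x : SB m)
    {j : Fin (D + 1)} (h : (j : ℕ) < (k : ℕ)) : mergeA α k x j = α j.castSucc := if_pos h

lemma mergeA_eq {D : ℕ} (α : Fin (D + 2) → SB m) (k : Fin (D + 1)) (x : SB m)
    {j : Fin (D + 1)} (h : (j : ℕ) = (k : ℕ)) :
    mergeA α k x j = α j.castSucc * x * α j.succ := by
  rw [mergeA, if_neg (by omega), if_pos h]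

lemma mergeA_gt {D : ℕ} (α : Fin (D + 2) → SB m) (k : Fin (D + 1)) (x : SB m)
    {j : Fin (D + 1)} (h : (k : ℕ) < (j : ℕ)) : mergeA α k x j = α j.succ := by
  rw [mergeA, if_neg (by omega), if_neg (by omega)]

lemma degM_mergeA {D : ℕ} (α : Fin (D + 2) → SB m) (k : Fin (D + 1)) (x : SB m)
    (hα : ∀ j, degM (α j) = Multiplicative.ofAdd 0) (hx : degM x = Multiplicative.ofAdd 0)
    (j : Fin (D + 1)) : degM (mergeA α k x j) = Multiplicative.ofAdd 0 := by
  rw [mergeA]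
  split_ifs <;> simp [map_mul, hα, hx]

lemma sbWordSub_succ {D : ℕ} (α : Fin (D + 2) → SB m) (g : Fin (D + 1) → SB m) :
    sbWordSub α g = α 0 * g 0 * sbWordSub (α ∘ Fin.succ) (g ∘ Fin.succ) := by
  simp [sbWordSub, List.ofFn_succ, Function.comp_def, mul_assoc]

lemma mergeA_comp_succ {D : ℕ} (α : Fin (D + 3) → SB m) (k : Fin (D + 1)) (x : SB m) :
    (mergeA α k.succ x) ∘ Fin.succ = mergeA (α ∘ Fin.succ) k x := by
  funext j
  have hcs : (j.succ).castSucc = (j.castSucc).succ := by ext; simp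
  simp only [Function.comp_apply]
  rcases lt_trichotomy (j : ℕ) (k : ℕ) with h | h | h
  · rw [mergeA_lt _ _ _ (j := j) h, mergeA_lt _ _ _ (j := j.succ) (by simp [Fin.val_succ]; omega),
      hcs]
    rfl
  · rw [mergeA_eq _ _ _ (j := j) h, mergeA_eq _ _ _ (j := j.succ) (by simp [Fin.val_succ, h]),
      hcs]
    rfl
  · rw [mergeA_gt _ _ _ (j := j) h, mergeA_gt _ _ _ (j := j.succ) (by simp [Fin.val_succ]; omega)]
    rfl

lemma sbWordSub_update : ∀ {D : ℕ} (α : Fin (D + 2) → SB m) (g : Fin (D + 1) → SB m)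
    (k : Fin (D + 1)) (x : SB m),
    sbWordSub α (Function.update g k x) =
      sbWordSub (mergeA α k x) fun l : Fin D => g (k.succAbove l)
  | 0, α, g, k, x => by
    have hk : k = 0 := Fin.fin_one_eq_zero k
    subst hk
    simp [sbWordSub, mergeA, mul_assoc]
  | (D + 1), α, g, k, x => by
    induction k using Fin.cases with
    | zero =>
      have h1 : ∀ l : Fin (D + 1), mergeA α 0 x l.succ = α l.succ.succ := fun l =>
        mergeA_gt _ _ _ (by simp)
      have h2 : mergeA α 0 x 0 = α 0 * x * α 1 := by
        rw [mergeA_eq _ _ _ (j := 0) rfl]; rfl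
      simp [sbWordSub, List.ofFn_succ, h1, h2, Fin.zero_succAbove, Fin.succ_ne_zero,
        Function.update_apply, mul_assoc]
    | succ k' =>
      have h0' : Function.update g k'.succ x 0 = g 0 :=
        Function.update_of_ne (Fin.succ_ne_zero k').symm _ _
      have hcomp : Function.update g k'.succ x ∘ Fin.succ = Function.update (g ∘ Fin.succ) k' x := by
        funext j
        by_cases h : j = k'
        · subst h; simp
        · simp [Function.comp_apply, Function.update_of_ne h,
            Function.update_of_ne (fun hc => h (Fin.succ_injective _ hc))]
      have hsA0 : k'.succ.succAbove 0 = 0 := by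
        rw [Fin.succAbove_of_castSucc_lt _ _ (by simp [Fin.lt_def])]; rfl
      have hsAs : (fun l : Fin (D + 1) => g (k'.succ.succAbove l)) ∘ Fin.succ =
          (g ∘ Fin.succ) ∘ k'.succAbove := by
        funext l
        simp [Function.comp_apply, Fin.succ_succAbove_succ]
      rw [sbWordSub_succ α (Function.update g k'.succ x),
        sbWordSub_succ (mergeA α k'.succ x) (fun l : Fin (D + 1) => g (k'.succ.succAbove l)),
        h0', hcomp, sbWordSub_update (α ∘ Fin.succ) (g ∘ Fin.succ) k' x,
        mergeA_comp_succ, hsA0, hsAs,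
        mergeA_lt _ _ _ (j := 0) (by simp)]
      rfl

lemma sbWordRepl_eq_sbWord {D : ℕ} (α : Fin (D + 2) → SB m) (idx : Fin (D + 1) → Fin (m - 1))
    (k : Fin (D + 1)) (x : SB m) :
    sbWordRepl α idx k x = sbWord (mergeA α k x) fun l : Fin D => idx (k.succAbove l) := by
  rw [sbWordRepl_eq_sub, sbWord_eq_sub, sbWordSub_update]

lemma sbWordRepl_mergeA {D : ℕ} (α : Fin (D + 2) → SB m) (idx : Fin (D + 1) → Fin (m - 1))
    (k : Fin (D + 1)) (x : SB m) (l : Fin D) (y : SB m) :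
    sbWordRepl (mergeA α k x) (fun l' : Fin D => idx (k.succAbove l')) l y =
      sbWordSub α (Function.update
        (Function.update (fun j => tauG (idx j)) (k.succAbove l) y) k x) := by
  rw [sbWordRepl_eq_sub]
  have hfun : Function.update (fun l' : Fin D => tauG (idx (k.succAbove l'))) l y =
      fun l' : Fin D => Function.update (fun j => tauG (idx j)) (k.succAbove l) y
        (k.succAbove l') := by
    funext l'
    by_cases h : l' = l
    · subst h; simp
    · rw [Function.update_of_ne h, Function.update_of_ne
        (fun hc => h (Fin.succAbove_right_injective hc))]
  rw [hfun, ← sbWordSub_update]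

end Words
section Decomp

variable {m : ℕ}

lemma sbWord_update_zero {D : ℕ} (γ : SB m) (α : Fin (D + 1) → SB m)
    (idx : Fin D → Fin (m - 1)) :
    sbWord (Function.update α 0 (γ * α 0)) idx = γ * sbWord α idx := by
  unfold sbWord
  rw [Function.update_self]
  have hfun : (fun j : Fin D => tauG (idx j) * Function.update α 0 (γ * α 0) j.succ)
      = fun j : Fin D => tauG (idx j) * α j.succ := by
    funext j; rw [Function.update_of_ne (Fin.succ_ne_zero j)]
  rw [hfun, mul_assoc]

lemma sbWord_cons_tau {D : ℕ} (i : Fin (m - 1)) (α : Fin (D + 1) → SB m)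
    (idx : Fin D → Fin (m - 1)) :
    sbWord (Fin.cons 1 α) (Fin.cons i idx) = tauG i * sbWord α idx := by
  unfold sbWord
  rw [List.ofFn_succ]
  simp [Fin.cons_succ, Fin.cons_zero, mul_assoc]

lemma exists_sbWord_list : ∀ (w : List (SBGen m)) (D : ℕ),
    degM (SB.mk (FreeMonoid.ofList w)) = Multiplicative.ofAdd D →
    ∃ (α : Fin (D + 1) → SB m) (idx : Fin D → Fin (m - 1)),
      (∀ j, degM (α j) = Multiplicative.ofAdd 0) ∧
      sbWord α idx = SB.mk (FreeMonoid.ofList w)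
  | [], D, h => by
    have hmk : SB.mk (FreeMonoid.ofList ([] : List (SBGen m))) = 1 := map_one _
    rw [hmk, map_one] at h
    have hD : D = 0 := by simpa using (congrArg Multiplicative.toAdd h).symm
    subst hD
    exact ⟨fun _ => 1, fun j => j.elim0, fun j => by simp, by rw [hmk]; simp [sbWord]⟩
  | (a :: w), D, h => by
    have hsplit : SB.mk (FreeMonoid.ofList (a :: w)) =
        SB.mk (FreeMonoid.of a) * SB.mk (FreeMonoid.ofList w) := by
      rw [← map_mul]; rfl
    rw [hsplit, map_mul, degM_mk_of] at h
    cases a with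
    | pos i =>
      have hw : degM (SB.mk (FreeMonoid.ofList w)) = Multiplicative.ofAdd D := by
        simpa [degGen] using h
      obtain ⟨α, idx, hα, hword⟩ := exists_sbWord_list w D hw
      refine ⟨Function.update α 0 (SB.mk (FreeMonoid.of (SBGen.pos i)) * α 0), idx, ?_, ?_⟩
      · intro j
        by_cases hj : j = 0
        · subst hj
          rw [Function.update_self]
          simp [map_mul, degM_mk_of, degGen, hα 0]
        · rw [Function.update_of_ne hj]; exact hα j
      · rw [sbWord_update_zero, hword, hsplit]
    | neg i =>
      have hw : degM (SB.mk (FreeMonoid.ofList w)) = Multiplicative.ofAdd D := by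
        simpa [degGen] using h
      obtain ⟨α, idx, hα, hword⟩ := exists_sbWord_list w D hw
      refine ⟨Function.update α 0 (SB.mk (FreeMonoid.of (SBGen.neg i)) * α 0), idx, ?_, ?_⟩
      · intro j
        by_cases hj : j = 0
        · subst hj
          rw [Function.update_self]
          simp [map_mul, degM_mk_of, degGen, hα 0]
        · rw [Function.update_of_ne hj]; exact hα j
      · rw [sbWord_update_zero, hword, hsplit]
    | tau i =>
      have ht : 1 + Multiplicative.toAdd (degM (SB.mk (FreeMonoid.ofList w))) = D := by
        have := congrArg Multiplicative.toAdd h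
        simpa [degGen] using this
      obtain ⟨D', rfl⟩ : ∃ D', D = D' + 1 :=
        ⟨Multiplicative.toAdd (degM (SB.mk (FreeMonoid.ofList w))), by omega⟩
      have hw : degM (SB.mk (FreeMonoid.ofList w)) = Multiplicative.ofAdd D' := by
        have h' : Multiplicative.toAdd (degM (SB.mk (FreeMonoid.ofList w))) = D' := by omega
        rw [← h']; simp
      obtain ⟨α, idx, hα, hword⟩ := exists_sbWord_list w D' hw
      refine ⟨Fin.cons 1 α, Fin.cons i idx, ?_, ?_⟩
      · intro j
        induction j using Fin.cases with
        | zero => simp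
        | succ j' => simpa using hα j'
      · rw [sbWord_cons_tau, hword, hsplit]
        rfl

lemma exists_sbWord (D : ℕ) (β : SB m) (h : degM β = Multiplicative.ofAdd D) :
    ∃ (α : Fin (D + 1) → SB m) (idx : Fin D → Fin (m - 1)),
      (∀ j, degM (α j) = Multiplicative.ofAdd 0) ∧ sbWord α idx = β := by
  induction β using Con.induction_on with
  | _ w => exact exists_sbWord_list (FreeMonoid.toList w) D h

end Decomp

lemma sum_succAbove_comm {N : Type*} [AddCommGroup N] {n : ℕ}
    (F : Fin (n + 1) → Fin (n + 1) → N) :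
    ∑ k : Fin (n + 1), ∑ l : Fin n, F k (k.succAbove l) =
      ∑ k : Fin (n + 1), ∑ l : Fin n, F (k.succAbove l) k := by
  have h1 : ∀ k, ∑ l : Fin n, F k (k.succAbove l) = (∑ b, F k b) - F k k := fun k => by
    rw [Fin.sum_univ_succAbove (fun b => F k b) k]; abel
  have h2 : ∀ k, ∑ l : Fin n, F (k.succAbove l) k = (∑ a, F a k) - F k k := fun k => by
    rw [Fin.sum_univ_succAbove (fun a => F a k) k]; abel
  rw [Finset.sum_congr rfl fun k _ => h1 k, Finset.sum_congr rfl fun k _ => h2 k,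
    Finset.sum_sub_distrib, Finset.sum_sub_distrib, Finset.sum_comm]
lemma key_comm (e : ℕ)
    (g0 g1 : MarkovD (e + 2) →ₗ[Lqz] MarkovD (e + 1))
    (g0' g1' : MarkovD (e + 1) →ₗ[Lqz] MarkovD e)
    (h0 : IsG (e + 2) false g0) (h1 : IsG (e + 2) true g1)
    (h0' : IsG (e + 1) false g0') (h1' : IsG (e + 1) true g1')
    (m : ℕ) (hm : 0 < m) (β : SB m) (hβ : degM β = Multiplicative.ofAdd (e + 2)) :
    g1' (g0 (classD (e + 2) m hm β)) = g0' (g1 (classD (e + 2) m hm β)) := by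
  obtain ⟨α, idx, hα, rfl⟩ := exists_sbWord (e + 2) β hβ
  have hdeg : ∀ (k : Fin (e + 2)) (x : SB m), degM x = Multiplicative.ofAdd 0 →
      ∀ j, degM (mergeA α k x j) = Multiplicative.ofAdd 0 := fun k x hx =>
    degM_mergeA α k x hα hx
  have hL : g1' (g0 (classD (e + 2) m hm (sbWord α idx))) =
      ∑ k : Fin (e + 2), ∑ l : Fin (e + 1),
        (fun a b => classD e m hm (sbWordSub α (Function.update
          (Function.update (fun j => tauG (idx j)) a 1) b (sG (idx b))))) k (k.succAbove l) := by
    have H0 : g0 (classD (e + 2) m hm (sbWord α idx)) =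
        ∑ k : Fin (e + 2), classD (e + 1) m hm (sbWordRepl α idx k (RepGen false (idx k))) :=
      h0 m hm α idx hα
    rw [H0, map_sum]
    refine Finset.sum_congr rfl fun k _ => ?_
    rw [show RepGen false (idx k) = (1 : SB m) from rfl, sbWordRepl_eq_sbWord α idx k 1]
    have H1 : g1' (classD (e + 1) m hm
          (sbWord (mergeA α k 1) fun l : Fin (e + 1) => idx (k.succAbove l))) =
        ∑ l : Fin (e + 1), classD e m hm (sbWordRepl (mergeA α k 1)
          (fun l' : Fin (e + 1) => idx (k.succAbove l')) l
          (RepGen true (idx (k.succAbove l)))) :=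
      h1' m hm (mergeA α k 1) (fun l => idx (k.succAbove l)) (hdeg k 1 (by simp))
    rw [H1]
    refine Finset.sum_congr rfl fun l _ => ?_
    rw [show RepGen true (idx (k.succAbove l)) = sG (idx (k.succAbove l)) from rfl,
      sbWordRepl_mergeA α idx k 1 l (sG (idx (k.succAbove l))),
      Function.update_comm (Fin.succAbove_ne k l)]
  have hR : g0' (g1 (classD (e + 2) m hm (sbWord α idx))) =
      ∑ k : Fin (e + 2), ∑ l : Fin (e + 1),
        (fun a b => classD e m hm (sbWordSub α (Function.update
          (Function.update (fun j => tauG (idx j)) a 1) b (sG (idx b))))) (k.succAbove l) k := by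
    have H1 : g1 (classD (e + 2) m hm (sbWord α idx)) =
        ∑ k : Fin (e + 2), classD (e + 1) m hm (sbWordRepl α idx k (RepGen true (idx k))) :=
      h1 m hm α idx hα
    rw [H1, map_sum]
    refine Finset.sum_congr rfl fun k _ => ?_
    rw [show RepGen true (idx k) = sG (idx k) from rfl,
      sbWordRepl_eq_sbWord α idx k (sG (idx k))]
    have H0 : g0' (classD (e + 1) m hm
          (sbWord (mergeA α k (sG (idx k))) fun l : Fin (e + 1) => idx (k.succAbove l))) =
        ∑ l : Fin (e + 1), classD e m hm (sbWordRepl (mergeA α k (sG (idx k)))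
          (fun l' : Fin (e + 1) => idx (k.succAbove l')) l
          (RepGen false (idx (k.succAbove l)))) :=
      h0' m hm (mergeA α k (sG (idx k))) (fun l => idx (k.succAbove l))
        (hdeg k (sG (idx k)) (by simp [degM_sG]))
    rw [H0]
    refine Finset.sum_congr rfl fun l _ => ?_
    rw [show RepGen false (idx (k.succAbove l)) = (1 : SB m) from rfl,
      sbWordRepl_mergeA α idx k (sG (idx k)) l 1]
  rw [hL, hR]
  exact sum_succAbove_comm (n := e + 1)
    (fun a b => classD e m hm (sbWordSub α (Function.update
      (Function.update (fun j => tauG (idx j)) a 1) b (sG (idx b)))))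
/-- For every `d ≥ 2`, `g_1 ∘ g_0 = g_0 ∘ g_1` as linear maps
`Markov(⊔S_dB) → Markov(⊔S_{d-2}B)` (the maps `g_0, g_1` being taken in the appropriate
degrees); equivalently, on dual spaces, `Φ_{d,1} ∘ Φ_{d-1,0} = Φ_{d,0} ∘ Φ_{d-1,1}`. -/
theorem g_maps_commute (d : ℕ) (hd : 2 ≤ d)
    (g0 : MarkovD d →ₗ[Lqz] MarkovD (d - 1)) (g1 : MarkovD d →ₗ[Lqz] MarkovD (d - 1))
    (g0' : MarkovD (d - 1) →ₗ[Lqz] MarkovD (d - 1 - 1))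
    (g1' : MarkovD (d - 1) →ₗ[Lqz] MarkovD (d - 1 - 1))
    (h0 : IsG d false g0) (h1 : IsG d true g1)
    (h0' : IsG (d - 1) false g0') (h1' : IsG (d - 1) true g1') :
    g1'.comp g0 = g0'.comp g1 := by
  obtain ⟨e, rfl⟩ : ∃ e, d = e + 2 := ⟨d - 2, by omega⟩
  have key : ∀ (m : ℕ) (hm : 0 < m) (β : SB m),
      degM β = Multiplicative.ofAdd (e + 2) →
      g1' (g0 (classD (e + 2) m hm β)) = g0' (g1 (classD (e + 2) m hm β)) :=
    key_comm e g0 g1 g0' g1' h0 h1 h0' h1'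
  apply Submodule.linearMap_qext
  refine DirectSum.linearMap_ext Lqz fun i => ?_
  refine LinearMap.ext_on (Submodule.span_span_coe_preimage
    (s := {x | ∃ β : SB i.1, degM β = Multiplicative.ofAdd (e + 2) ∧ x = ofHZ β})) ?_
  rintro ⟨v, hv⟩ ⟨β, hβ, hvβ⟩
  simp only [Set.mem_preimage] at hvβ
  subst hvβ
  simp only [LinearMap.comp_apply, Submodule.mkQ_apply]
  have key2 := key i.1 i.2 β hβ
  simp only [classD, dif_pos hβ] at key2
  exact key2

end
end SingularHOMFLYPT
end

section
/- The bilinear operation on Markov(⊔SB) determined on classes of braids by [α,n]·[β,m] := [α ∗ β, n+m] for α ∈ SB_n, β ∈ SB_m, and extended ℂ(q,z)-bilinearly, is well defined (independent of the chosen representatives in ⊕_{n≥1} H_z(SB_n)), and it makes Markov(⊔SB) an associative, commutative, unital ℂ(q,z)-algebra whose unit is the class [1,1] of the trivial braid on one strand. -/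
open scoped TensorProduct DirectSum

set_option synthInstance.maxHeartbeats 1000000
set_option maxHeartbeats 2000000

namespace SingularHOMFLYPT

noncomputable section

open FreeMonoid

/-! ### Generic monoid lemmas -/

theorem inv_comm_of_comm {M : Type*} [Monoid M] {u v x : M} (h1 : u * v = 1) (h2 : v * u = 1)
    (h : u * x = x * u) : v * x = x * v := by
  calc v * x = v * x * (u * v) := by rw [h1, mul_one]
    _ = v * (x * u) * v := by simp only [mul_assoc]
    _ = v * (u * x) * v := by rw [h]
    _ = (v * u) * (x * v) := by simp only [mul_assoc]
    _ = x * v := by rw [h2, one_mul]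

theorem conj_transfer {M : Type*} [Monoid M] {X u u' v v' : M} (h : X * u = v * X)
    (hu : u * u' = 1) (hv' : v' * v = 1) : X * u' = v' * X := by
  calc X * u' = (v' * v) * (X * u') := by rw [hv', one_mul]
    _ = v' * ((v * X) * u') := by simp only [mul_assoc]
    _ = v' * ((X * u) * u') := by rw [h]
    _ = v' * (X * (u * u')) := by simp only [mul_assoc]
    _ = v' * X := by rw [hu, mul_one]

/-! ### Generators of `SB n` -/

theorem SB.ind {n : ℕ} {P : SB n → Prop} (h : ∀ w, P (SB.mk w)) (x : SB n) : P x :=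
  Con.induction_on x h

/-- The element of `SB n` associated to a single generator letter. -/
def genE {n : ℕ} (g : SBGen n) : SB n := SB.mk (.of g)

theorem genE_pos {n : ℕ} (i : Fin (n - 1)) : genE (.pos i) = sG i := rfl
theorem genE_neg {n : ℕ} (i : Fin (n - 1)) : genE (.neg i) = sInvG i := rfl
theorem genE_tau {n : ℕ} (i : Fin (n - 1)) : genE (.tau i) = tauG i := rfl

/-- The index of a generator letter. -/
def gidx {n : ℕ} : SBGen n → ℕ
  | .pos i => i
  | .neg i => i
  | .tau i => i

theorem gidx_lt {n : ℕ} (g : SBGen n) : gidx g < n - 1 := by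
  cases g <;> exact Fin.is_lt _

theorem gidx_shiftGen {n N k : ℕ} (h : k + n ≤ N) (g : SBGen n) :
    gidx (shiftGen N k h g) = k + gidx g := by
  cases g <;> rfl

theorem sG_mul_sInvG {n : ℕ} (i : Fin (n - 1)) : sG i * sInvG i = 1 := by
  simpa only [map_mul, map_one, sG, sInvG, tauG] using SB.sound (SBRel.inv_right (n := n) i)

theorem sInvG_mul_sG {n : ℕ} (i : Fin (n - 1)) : sInvG i * sG i = 1 := by
  simpa only [map_mul, map_one, sG, sInvG, tauG] using SB.sound (SBRel.inv_left (n := n) i)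

theorem braid_sG {n : ℕ} (i j : Fin (n - 1)) (h : (i : ℕ) + 1 = j ∨ (j : ℕ) + 1 = i) :
    sG i * sG j * sG i = sG j * sG i * sG j := by
  simpa only [map_mul, sG, sInvG, tauG] using SB.sound (SBRel.braid (n := n) i j h)

theorem braidTau_sG {n : ℕ} (i j : Fin (n - 1)) (h : (i : ℕ) + 1 = j ∨ (j : ℕ) + 1 = i) :
    sG i * sG j * tauG i = tauG j * sG i * sG j := by
  simpa only [map_mul, sG, sInvG, tauG] using SB.sound (SBRel.braid_tau (n := n) i j h)

theorem comm_sG_sG {n : ℕ} (i j : Fin (n - 1)) (h : (i : ℕ) + 2 ≤ j ∨ (j : ℕ) + 2 ≤ i) :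
    sG i * sG j = sG j * sG i := by
  simpa only [map_mul, sG, sInvG, tauG] using SB.sound (SBRel.comm_ss (n := n) i j h)

theorem comm_sG_tauG {n : ℕ} (i j : Fin (n - 1)) (h : (i : ℕ) + 2 ≤ j ∨ (j : ℕ) + 2 ≤ i) :
    sG i * tauG j = tauG j * sG i := by
  simpa only [map_mul, sG, sInvG, tauG] using SB.sound (SBRel.comm_st (n := n) i j h)

theorem comm_tauG_tauG {n : ℕ} (i j : Fin (n - 1)) (h : (i : ℕ) + 2 ≤ j ∨ (j : ℕ) + 2 ≤ i) :
    tauG i * tauG j = tauG j * tauG i := by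
  simpa only [map_mul, sG, sInvG, tauG] using SB.sound (SBRel.comm_tt (n := n) i j h)

/-- Any element commuting with `sG i` commutes with `sInvG i`. -/
theorem comm_sInvG_of_comm_sG {n : ℕ} {i : Fin (n - 1)} {x : SB n} (h : sG i * x = x * sG i) :
    sInvG i * x = x * sInvG i :=
  inv_comm_of_comm (sG_mul_sInvG i) (sInvG_mul_sG i) h

/-- Two generator letters whose indices differ by at least `2` commute. -/
theorem genE_comm {n : ℕ} (g h : SBGen n)
    (sep : gidx g + 2 ≤ gidx h ∨ gidx h + 2 ≤ gidx g) :
    genE g * genE h = genE h * genE g := by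
  cases g with
  | pos i =>
    cases h with
    | pos j => exact comm_sG_sG i j sep
    | neg j => exact (comm_sInvG_of_comm_sG (comm_sG_sG j i (Or.symm sep))).symm
    | tau j => exact comm_sG_tauG i j sep
  | neg i =>
    cases h with
    | pos j => exact comm_sInvG_of_comm_sG (comm_sG_sG i j sep)
    | neg j =>
      exact comm_sInvG_of_comm_sG
        ((comm_sInvG_of_comm_sG (x := sG i) (comm_sG_sG j i (Or.symm sep))).symm)
    | tau j => exact comm_sInvG_of_comm_sG (comm_sG_tauG i j sep)
  | tau i =>
    cases h with
    | pos j => exact (comm_sG_tauG j i (Or.symm sep)).symm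
    | neg j => exact (comm_sInvG_of_comm_sG (x := tauG i) (comm_sG_tauG j i (Or.symm sep))).symm
    | tau j => exact comm_tauG_tauG i j sep

theorem shiftHom_of {n N k : ℕ} (h : k + n ≤ N) (g : SBGen n) :
    shiftHom N k h (SB.mk (.of g)) = genE (shiftGen N k h g) := by
  rw [shiftHom_mk, FreeMonoid.map_of]; rfl

/-- A single generator letter commutes with any braid supported on indices `≥ k₂`. -/
theorem genE_comm_shiftHom {n₂ N k₂ : ℕ} (h₂ : k₂ + n₂ ≤ N) (g : SBGen N)
    (hg : gidx g + 2 ≤ k₂) (y : SB n₂) :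
    genE g * shiftHom N k₂ h₂ y = shiftHom N k₂ h₂ y * genE g := by
  induction y using SB.ind with
  | h w =>
  induction w using FreeMonoid.recOn with
  | one => rw [map_one, map_one, one_mul, mul_one]
  | of_mul g' w ih =>
    rw [map_mul, map_mul, shiftHom_of]
    have hc : genE g * genE (shiftGen N k₂ h₂ g') = genE (shiftGen N k₂ h₂ g') * genE g := by
      refine genE_comm _ _ (Or.inl ?_)
      rw [gidx_shiftGen]; omega
    calc genE g * (genE (shiftGen N k₂ h₂ g') * shiftHom N k₂ h₂ (SB.mk w))
        = (genE g * genE (shiftGen N k₂ h₂ g')) * shiftHom N k₂ h₂ (SB.mk w) := by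
          rw [mul_assoc]
      _ = genE (shiftGen N k₂ h₂ g') * (genE g * shiftHom N k₂ h₂ (SB.mk w)) := by
          rw [hc, mul_assoc]
      _ = _ := by rw [ih, ← mul_assoc]

/-- Braids supported on separated blocks of strands commute. -/
theorem shiftHom_comm {n₁ n₂ N k₁ k₂ : ℕ} (h₁ : k₁ + n₁ ≤ N) (h₂ : k₂ + n₂ ≤ N)
    (sep : k₁ + n₁ ≤ k₂) (x : SB n₁) (y : SB n₂) :
    shiftHom N k₁ h₁ x * shiftHom N k₂ h₂ y = shiftHom N k₂ h₂ y * shiftHom N k₁ h₁ x := by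
  induction x using SB.ind with
  | h w =>
   induction w using FreeMonoid.recOn with
  | one => simp only [map_one, one_mul, mul_one]
  | of_mul g w ih =>
    simp only [map_mul]
    rw [shiftHom_of]
    have hgen : genE (shiftGen N k₁ h₁ g) * shiftHom N k₂ h₂ y
        = shiftHom N k₂ h₂ y * genE (shiftGen N k₁ h₁ g) := by
      refine genE_comm_shiftHom h₂ _ ?_ y
      rw [gidx_shiftGen]
      have := gidx_lt g
      omega
    calc genE (shiftGen N k₁ h₁ g) * shiftHom N k₁ h₁ (SB.mk w) * shiftHom N k₂ h₂ y
        = genE (shiftGen N k₁ h₁ g) * (shiftHom N k₁ h₁ (SB.mk w) * shiftHom N k₂ h₂ y) := by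
          rw [mul_assoc]
      _ = genE (shiftGen N k₁ h₁ g) * (shiftHom N k₂ h₂ y * shiftHom N k₁ h₁ (SB.mk w)) := by
          rw [ih]
      _ = _ := by rw [← mul_assoc, hgen, mul_assoc]

/-- Composition of shift homomorphisms. -/
theorem shiftHom_comp {m M N k k' : ℕ} (hM : k' + m ≤ M) (hN : k + M ≤ N) (x : SB m) :
    shiftHom N k hN (shiftHom M k' hM x) = shiftHom N (k + k') (by omega) x := by
  induction x using SB.ind with
  | h w =>
    rw [shiftHom_mk, shiftHom_mk, FreeMonoid.map_map]
    have hfun : (shiftGen N k hN ∘ shiftGen M k' hM) = shiftGen N (k + k') (by omega) := by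
      funext g
      cases g <;> simp [shiftGen, Function.comp, Fin.ext_iff] <;> omega
    rw [hfun]
    exact (shiftHom_mk _ _ _ _).symm

/-! ### Reassociation helpers -/

theorem reassoc_comm {M : Type*} [Monoid M] {x y : M} (h : x * y = y * x) (z : M) :
    x * (y * z) = y * (x * z) := by rw [← mul_assoc, h, mul_assoc]

theorem reassoc3 {M : Type*} [Monoid M] {a b c d e f : M} (h : a * b * c = d * e * f) (z : M) :
    a * (b * (c * z)) = d * (e * (f * z)) := by
  rw [← mul_assoc, ← mul_assoc, h, mul_assoc, mul_assoc]

theorem conj_transfer' {M : Type*} [Monoid M] {X u u' v v' : M} (h : u * X = X * v)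
    (hu' : u' * u = 1) (hv : v * v' = 1) : u' * X = X * v' := by
  calc u' * X = u' * (X * (v * v')) := by rw [hv, mul_one]
    _ = u' * ((X * v) * v') := by rw [mul_assoc]
    _ = u' * ((u * X) * v') := by rw [← h]
    _ = (u' * u) * (X * v') := by simp only [mul_assoc]
    _ = X * v' := by rw [hu', one_mul]

theorem sG_cast {N a b : ℕ} (e : a = b) (ha : a < N - 1) (hb : b < N - 1) :
    sG (n := N) ⟨a, ha⟩ = sG ⟨b, hb⟩ := by subst e; rfl

theorem tauG_cast {N a b : ℕ} (e : a = b) (ha : a < N - 1) (hb : b < N - 1) :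
    tauG (n := N) ⟨a, ha⟩ = tauG ⟨b, hb⟩ := by subst e; rfl

theorem sInvG_cast {N a b : ℕ} (e : a = b) (ha : a < N - 1) (hb : b < N - 1) :
    sInvG (n := N) ⟨a, ha⟩ = sInvG ⟨b, hb⟩ := by subst e; rfl

/-! ### The shuffle braids `cword` and the block transposition braids `dword` -/

/-- The descending word `σ_{k+m-1} ⋯ σ_{k+1} σ_k` (`0`-based indices) in `SB N`. -/
def cword (N k : ℕ) : (m : ℕ) → k + m + 1 ≤ N → SB N
  | 0, _ => 1
  | m + 1, h => sG ⟨k + m, by omega⟩ * cword N k m (by omega)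

/-- The ascending word `σ_k⁻¹ σ_{k+1}⁻¹ ⋯ σ_{k+m-1}⁻¹`, inverse to `cword`. -/
def cwordInv (N k : ℕ) : (m : ℕ) → k + m + 1 ≤ N → SB N
  | 0, _ => 1
  | m + 1, h => cwordInv N k m (by omega) * sInvG ⟨k + m, by omega⟩

theorem cword_mul_cwordInv (N k : ℕ) :
    ∀ (m : ℕ) (h : k + m + 1 ≤ N), cword N k m h * cwordInv N k m h = 1
  | 0, _ => mul_one 1
  | m + 1, h => by
    simp only [cword, cwordInv]
    calc sG ⟨k + m, by omega⟩ * cword N k m (by omega) *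
          (cwordInv N k m (by omega) * sInvG ⟨k + m, by omega⟩)
        = sG ⟨k + m, by omega⟩ *
            (cword N k m (by omega) * cwordInv N k m (by omega) * sInvG ⟨k + m, by omega⟩) := by
          simp only [mul_assoc]
      _ = 1 := by rw [cword_mul_cwordInv N k m (by omega), one_mul, sG_mul_sInvG]

theorem cwordInv_mul_cword (N k : ℕ) :
    ∀ (m : ℕ) (h : k + m + 1 ≤ N), cwordInv N k m h * cword N k m h = 1
  | 0, _ => mul_one 1
  | m + 1, h => by
    simp only [cword, cwordInv]
    calc cwordInv N k m (by omega) * sInvG ⟨k + m, by omega⟩ *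
          (sG ⟨k + m, by omega⟩ * cword N k m (by omega))
        = cwordInv N k m (by omega) *
            (sInvG ⟨k + m, by omega⟩ * sG ⟨k + m, by omega⟩ * cword N k m (by omega)) := by
          simp only [mul_assoc]
      _ = 1 := by rw [sInvG_mul_sG, one_mul, cwordInv_mul_cword N k m (by omega)]

theorem genE_comm_cword (N k : ℕ) (g : SBGen N) :
    ∀ (m : ℕ) (h : k + m + 1 ≤ N), (gidx g + 2 ≤ k ∨ k + m + 1 ≤ gidx g) →
      genE g * cword N k m h = cword N k m h * genE g
  | 0, _, _ => by simp only [cword, one_mul, mul_one]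
  | m + 1, h, sep => by
    simp only [cword]
    have h1 : genE g * sG ⟨k + m, by omega⟩ = sG ⟨k + m, by omega⟩ * genE g := by
      refine genE_comm g (.pos ⟨k + m, by omega⟩) ?_
      show gidx g + 2 ≤ k + m ∨ k + m + 2 ≤ gidx g
      rcases sep with s | s
      · exact Or.inl (by omega)
      · exact Or.inr (by omega)
    have h2 : genE g * cword N k m (by omega) = cword N k m (by omega) * genE g := by
      refine genE_comm_cword N k g m (by omega) ?_
      rcases sep with s | s
      · exact Or.inl s
      · exact Or.inr (by omega)
    rw [reassoc_comm h1, h2, mul_assoc]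

theorem sG_comm_cword (N k q : ℕ) (m : ℕ) (h : k + m + 1 ≤ N) (hq : q < N - 1)
    (sep : q + 2 ≤ k ∨ k + m + 1 ≤ q) :
    sG ⟨q, hq⟩ * cword N k m h = cword N k m h * sG ⟨q, hq⟩ :=
  genE_comm_cword N k (.pos ⟨q, hq⟩) m h sep

theorem tauG_comm_cword (N k q : ℕ) (m : ℕ) (h : k + m + 1 ≤ N) (hq : q < N - 1)
    (sep : q + 2 ≤ k ∨ k + m + 1 ≤ q) :
    tauG ⟨q, hq⟩ * cword N k m h = cword N k m h * tauG ⟨q, hq⟩ :=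
  genE_comm_cword N k (.tau ⟨q, hq⟩) m h sep

/-- The key shuffle relation: `σ_q · c = c · σ_{q+1}` for `k ≤ q ≤ k+m-2`. -/
theorem sG_mul_cword (N k : ℕ) :
    ∀ (m : ℕ) (q : ℕ) (h : k + m + 1 ≤ N) (h1 : k ≤ q) (h2 : q + 2 ≤ k + m),
      sG ⟨q, by omega⟩ * cword N k m h = cword N k m h * sG ⟨q + 1, by omega⟩
  | 0, q, h, h1, h2 => absurd h2 (by omega)
  | 1, q, h, h1, h2 => absurd h2 (by omega)
  | m + 2, q, h, h1, h2 => by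
    rcases Nat.lt_or_ge q (k + m) with hlt | hge
    · simp only [cword]
      have hcomm : sG (n := N) ⟨q, by omega⟩ * sG ⟨k + (m + 1), by omega⟩
          = sG ⟨k + (m + 1), by omega⟩ * sG ⟨q, by omega⟩ :=
        comm_sG_sG ⟨q, by omega⟩ ⟨k + (m + 1), by omega⟩
          (Or.inl (by show q + 2 ≤ k + (m + 1); omega))
      have ih := sG_mul_cword N k (m + 1) q (by omega) h1 (by omega)
      simp only [cword] at ih
      rw [reassoc_comm hcomm, ih]
      simp only [mul_assoc]
    · have hq : q = k + m := by omega
      subst hq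
      simp only [cword]
      have hbraid : sG (n := N) ⟨k + m, by omega⟩ * sG ⟨k + (m + 1), by omega⟩ *
            sG ⟨k + m, by omega⟩
          = sG ⟨k + (m + 1), by omega⟩ * sG ⟨k + m, by omega⟩ * sG ⟨k + (m + 1), by omega⟩ :=
        braid_sG _ _ (Or.inl rfl)
      have hcomm : sG (n := N) ⟨k + (m + 1), by omega⟩ * cword N k m (by omega)
          = cword N k m (by omega) * sG ⟨k + (m + 1), by omega⟩ :=
        sG_comm_cword N k (k + (m + 1)) m (by omega) (by omega) (by omega)
      rw [reassoc3 hbraid, hcomm]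
      have : (k + m) + 1 = k + (m + 1) := by omega
      rw [sG_cast this (by omega) (by omega)]
      simp only [mul_assoc]

/-- The key shuffle relation for `τ`: `τ_q · c = c · τ_{q+1}` for `k ≤ q ≤ k+m-2`. -/
theorem tauG_mul_cword (N k : ℕ) :
    ∀ (m : ℕ) (q : ℕ) (h : k + m + 1 ≤ N) (h1 : k ≤ q) (h2 : q + 2 ≤ k + m),
      tauG ⟨q, by omega⟩ * cword N k m h = cword N k m h * tauG ⟨q + 1, by omega⟩
  | 0, q, h, h1, h2 => absurd h2 (by omega)
  | 1, q, h, h1, h2 => absurd h2 (by omega)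
  | m + 2, q, h, h1, h2 => by
    rcases Nat.lt_or_ge q (k + m) with hlt | hge
    · simp only [cword]
      have hcomm : tauG (n := N) ⟨q, by omega⟩ * sG ⟨k + (m + 1), by omega⟩
          = sG ⟨k + (m + 1), by omega⟩ * tauG ⟨q, by omega⟩ :=
        (comm_sG_tauG ⟨k + (m + 1), by omega⟩ ⟨q, by omega⟩
          (Or.inr (by show q + 2 ≤ k + (m + 1); omega))).symm
      have ih := tauG_mul_cword N k (m + 1) q (by omega) h1 (by omega)
      simp only [cword] at ih
      rw [reassoc_comm hcomm, ih]
      simp only [mul_assoc]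
    · have hq : q = k + m := by omega
      subst hq
      simp only [cword]
      have hbraid : tauG (n := N) ⟨k + m, by omega⟩ * sG ⟨k + (m + 1), by omega⟩ *
            sG ⟨k + m, by omega⟩
          = sG ⟨k + (m + 1), by omega⟩ * sG ⟨k + m, by omega⟩ * tauG ⟨k + (m + 1), by omega⟩ :=
        (braidTau_sG ⟨k + (m + 1), by omega⟩ ⟨k + m, by omega⟩ (Or.inr rfl)).symm
      have hcomm : tauG (n := N) ⟨k + (m + 1), by omega⟩ * cword N k m (by omega)
          = cword N k m (by omega) * tauG ⟨k + (m + 1), by omega⟩ :=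
        tauG_comm_cword N k (k + (m + 1)) m (by omega) (by omega) (by omega)
      rw [reassoc3 hbraid, hcomm]
      have : (k + m) + 1 = k + (m + 1) := by omega
      rw [tauG_cast this (by omega) (by omega)]
      simp only [mul_assoc]


/-- The key shuffle relation for `σ⁻¹`: `σ_q⁻¹ · c = c · σ_{q+1}⁻¹`. -/
theorem sInvG_mul_cword (N k : ℕ) (m : ℕ) (q : ℕ) (h : k + m + 1 ≤ N) (h1 : k ≤ q)
    (h2 : q + 2 ≤ k + m) :
    sInvG ⟨q, by omega⟩ * cword N k m h = cword N k m h * sInvG ⟨q + 1, by omega⟩ :=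
  conj_transfer' (sG_mul_cword N k m q h h1 h2) (sInvG_mul_sG _) (sG_mul_sInvG _)

/-- Word-level shuffle relation: `sh_k(γ) · c = c · sh_{k+1}(γ)`. -/
theorem shiftHom_mul_cword {m N k : ℕ} (h : k + m + 1 ≤ N) (hs : k + m ≤ N)
    (hs' : k + 1 + m ≤ N) (γ : SB m) :
    shiftHom N k hs γ * cword N k m h = cword N k m h * shiftHom N (k + 1) hs' γ := by
  induction γ using SB.ind with
  | h w =>
  induction w using FreeMonoid.recOn with
  | one => simp only [map_one, one_mul, mul_one]
  | of_mul g w ih =>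
    simp only [map_mul]
    rw [shiftHom_of, shiftHom_of]
    have hgen : genE (shiftGen N k hs g) * cword N k m h
        = cword N k m h * genE (shiftGen N (k + 1) hs' g) := by
      cases g with
      | pos i =>
        have hi := i.isLt
        show sG ⟨k + ↑i, by omega⟩ * _ = _ * sG ⟨k + 1 + ↑i, by omega⟩
        rw [sG_cast (show k + 1 + ↑i = (k + ↑i) + 1 by omega) (by omega) (by omega)]
        exact sG_mul_cword N k m (k + ↑i) h (by omega) (by omega)
      | neg i =>
        have hi := i.isLt
        show sInvG ⟨k + ↑i, by omega⟩ * _ = _ * sInvG ⟨k + 1 + ↑i, by omega⟩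
        rw [sInvG_cast (show k + 1 + ↑i = (k + ↑i) + 1 by omega) (by omega) (by omega)]
        exact sInvG_mul_cword N k m (k + ↑i) h (by omega) (by omega)
      | tau i =>
        have hi := i.isLt
        show tauG ⟨k + ↑i, by omega⟩ * _ = _ * tauG ⟨k + 1 + ↑i, by omega⟩
        rw [tauG_cast (show k + 1 + ↑i = (k + ↑i) + 1 by omega) (by omega) (by omega)]
        exact tauG_mul_cword N k m (k + ↑i) h (by omega) (by omega)
    rw [mul_assoc, ih, ← mul_assoc, hgen]
    simp only [mul_assoc]

/-- The key exchange identity `c_k c_{k+1} σ_k = σ_{k+m} c_k c_{k+1}`. -/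
theorem cc_sG (N k : ℕ) :
    ∀ (m : ℕ) (h : k + m + 2 ≤ N),
      (cword N k m (by omega) * cword N (k + 1) m (by omega)) * sG ⟨k, by omega⟩
        = sG ⟨k + m, by omega⟩ * (cword N k m (by omega) * cword N (k + 1) m (by omega))
  | 0, h => by
    simp only [cword, one_mul, mul_one]
    exact sG_cast (by omega) (by omega) (by omega)
  | m + 1, h => by
    simp only [cword, mul_assoc]
    have hc1 : cword N k m (by omega) * sG ⟨k + 1 + m, by omega⟩
        = sG ⟨k + 1 + m, by omega⟩ * cword N k m (by omega) :=
      (sG_comm_cword N k (k + 1 + m) m (by omega) (by omega) (Or.inr (by omega))).symm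
    have ih := cc_sG N k m (by omega)
    rw [mul_assoc] at ih
    have hbraid : sG (n := N) ⟨k + m, by omega⟩ * sG ⟨k + 1 + m, by omega⟩ * sG ⟨k + m, by omega⟩
        = sG ⟨k + 1 + m, by omega⟩ * sG ⟨k + m, by omega⟩ * sG ⟨k + 1 + m, by omega⟩ :=
      braid_sG _ _ (Or.inl (by show k + m + 1 = k + 1 + m; omega))
    have hc2 : sG (n := N) ⟨k + (m + 1), by omega⟩ * cword N k m (by omega)
        = cword N k m (by omega) * sG ⟨k + (m + 1), by omega⟩ :=
      sG_comm_cword N k (k + (m + 1)) m (by omega) (by omega) (Or.inr (by omega))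
    rw [reassoc_comm hc1, ih, reassoc3 hbraid,
      sG_cast (show k + 1 + m = k + (m + 1) by omega) (by omega) (by omega),
      reassoc_comm hc2]

/-- The key exchange identity `c_k c_{k+1} τ_k = τ_{k+m} c_k c_{k+1}`. -/
theorem cc_tauG (N k : ℕ) :
    ∀ (m : ℕ) (h : k + m + 2 ≤ N),
      (cword N k m (by omega) * cword N (k + 1) m (by omega)) * tauG ⟨k, by omega⟩
        = tauG ⟨k + m, by omega⟩ * (cword N k m (by omega) * cword N (k + 1) m (by omega))
  | 0, h => by
    simp only [cword, one_mul, mul_one]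
    exact tauG_cast (by omega) (by omega) (by omega)
  | m + 1, h => by
    simp only [cword, mul_assoc]
    have hc1 : cword N k m (by omega) * sG ⟨k + 1 + m, by omega⟩
        = sG ⟨k + 1 + m, by omega⟩ * cword N k m (by omega) :=
      (sG_comm_cword N k (k + 1 + m) m (by omega) (by omega) (Or.inr (by omega))).symm
    have ih := cc_tauG N k m (by omega)
    rw [mul_assoc] at ih
    have hbraid : sG (n := N) ⟨k + m, by omega⟩ * sG ⟨k + 1 + m, by omega⟩ *
          tauG ⟨k + m, by omega⟩
        = tauG ⟨k + 1 + m, by omega⟩ * sG ⟨k + m, by omega⟩ * sG ⟨k + 1 + m, by omega⟩ :=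
      braidTau_sG _ _ (Or.inl (by show k + m + 1 = k + 1 + m; omega))
    have hc2 : sG (n := N) ⟨k + (m + 1), by omega⟩ * cword N k m (by omega)
        = cword N k m (by omega) * sG ⟨k + (m + 1), by omega⟩ :=
      sG_comm_cword N k (k + (m + 1)) m (by omega) (by omega) (Or.inr (by omega))
    rw [reassoc_comm hc1, ih, reassoc3 hbraid,
      tauG_cast (show k + 1 + m = k + (m + 1) by omega) (by omega) (by omega),
      sG_cast (show k + 1 + m = k + (m + 1) by omega) (by omega) (by omega),
      reassoc_comm hc2]

/-- The key exchange identity for `σ⁻¹`. -/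
theorem cc_sInvG (N k : ℕ) (m : ℕ) (h : k + m + 2 ≤ N) :
    (cword N k m (by omega) * cword N (k + 1) m (by omega)) * sInvG ⟨k, by omega⟩
      = sInvG ⟨k + m, by omega⟩ * (cword N k m (by omega) * cword N (k + 1) m (by omega)) :=
  conj_transfer (cc_sG N k m h) (sG_mul_sInvG _) (sInvG_mul_sG _)

/-! ### The block transposition braids -/

/-- The braid `c_0 c_1 ⋯ c_{n-1}` exchanging a block of `n` strands with a block of
`m` strands. -/
def dword (N m : ℕ) : (n : ℕ) → n + m ≤ N → SB N
  | 0, _ => 1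
  | n + 1, h => dword N m n (by omega) * cword N n m (by omega)

/-- The inverse of `dword`. -/
def dwordInv (N m : ℕ) : (n : ℕ) → n + m ≤ N → SB N
  | 0, _ => 1
  | n + 1, h => cwordInv N n m (by omega) * dwordInv N m n (by omega)

theorem dword_mul_dwordInv (N m : ℕ) :
    ∀ (n : ℕ) (h : n + m ≤ N), dword N m n h * dwordInv N m n h = 1
  | 0, _ => mul_one 1
  | n + 1, h => by
    simp only [dword, dwordInv]
    calc dword N m n (by omega) * cword N n m (by omega) *
          (cwordInv N n m (by omega) * dwordInv N m n (by omega))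
        = dword N m n (by omega) *
            (cword N n m (by omega) * cwordInv N n m (by omega)) * dwordInv N m n (by omega) := by
          simp only [mul_assoc]
      _ = 1 := by
          rw [cword_mul_cwordInv, mul_one, dword_mul_dwordInv N m n (by omega)]

theorem dwordInv_mul_dword (N m : ℕ) :
    ∀ (n : ℕ) (h : n + m ≤ N), dwordInv N m n h * dword N m n h = 1
  | 0, _ => mul_one 1
  | n + 1, h => by
    simp only [dword, dwordInv]
    calc cwordInv N n m (by omega) * dwordInv N m n (by omega) *
          (dword N m n (by omega) * cword N n m (by omega))
        = cwordInv N n m (by omega) *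
            (dwordInv N m n (by omega) * dword N m n (by omega)) * cword N n m (by omega) := by
          simp only [mul_assoc]
      _ = 1 := by
          rw [dwordInv_mul_dword N m n (by omega), mul_one, cwordInv_mul_cword]

theorem genE_comm_dword (N m : ℕ) (g : SBGen N) :
    ∀ (n : ℕ) (h : n + m ≤ N), n + m ≤ gidx g →
      genE g * dword N m n h = dword N m n h * genE g
  | 0, _, _ => by simp only [dword, one_mul, mul_one]
  | n + 1, h, sep => by
    simp only [dword]
    have h1 := genE_comm_dword N m g n (by omega) (by omega)
    have h2 : genE g * cword N n m (by omega) = cword N n m (by omega) * genE g :=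
      genE_comm_cword N n g m (by omega) (Or.inr (by omega))
    rw [← mul_assoc, h1, mul_assoc, h2, mul_assoc]

theorem sG_comm_dword (N m q : ℕ) (n : ℕ) (h : n + m ≤ N) (hq : q < N - 1)
    (sep : n + m ≤ q) :
    sG ⟨q, hq⟩ * dword N m n h = dword N m n h * sG ⟨q, hq⟩ :=
  genE_comm_dword N m (.pos ⟨q, hq⟩) n h sep

theorem tauG_comm_dword (N m q : ℕ) (n : ℕ) (h : n + m ≤ N) (hq : q < N - 1)
    (sep : n + m ≤ q) :
    tauG ⟨q, hq⟩ * dword N m n h = dword N m n h * tauG ⟨q, hq⟩ :=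
  genE_comm_dword N m (.tau ⟨q, hq⟩) n h sep

/-- Conjugation by the block transposition: `d · σ_q = σ_{q+m} · d` for `q ≤ n-2`. -/
theorem dword_mul_sG (N m : ℕ) :
    ∀ (n q : ℕ) (h : n + m ≤ N) (hq : q + 2 ≤ n),
      dword N m n h * sG ⟨q, by omega⟩ = sG ⟨q + m, by omega⟩ * dword N m n h
  | 0, q, h, hq => absurd hq (by omega)
  | 1, q, h, hq => absurd hq (by omega)
  | n + 2, q, h, hq => by
    rcases Nat.lt_or_ge (q + 2) (n + 2) with hlt | hge
    · simp only [dword]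
      have hcomm : sG (n := N) ⟨q, by omega⟩ * cword N (n + 1) m (by omega)
          = cword N (n + 1) m (by omega) * sG ⟨q, by omega⟩ :=
        sG_comm_cword N (n + 1) q m (by omega) (by omega) (Or.inl (by omega))
      have ih := dword_mul_sG N m (n + 1) q (by omega) (by omega)
      simp only [dword] at ih
      rw [mul_assoc, ← hcomm, ← mul_assoc, ih]
      simp only [mul_assoc]
    · have hqn : q = n := by omega
      subst hqn
      simp only [dword, mul_assoc]
      have cc := cc_sG N q m (by omega)
      rw [mul_assoc] at cc
      have hcomm : sG (n := N) ⟨q + m, by omega⟩ * dword N m q (by omega)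
          = dword N m q (by omega) * sG ⟨q + m, by omega⟩ :=
        sG_comm_dword N m (q + m) q (by omega) (by omega) (by omega)
      rw [cc, reassoc_comm hcomm.symm]

/-- Conjugation by the block transposition: `d · τ_q = τ_{q+m} · d` for `q ≤ n-2`. -/
theorem dword_mul_tauG (N m : ℕ) :
    ∀ (n q : ℕ) (h : n + m ≤ N) (hq : q + 2 ≤ n),
      dword N m n h * tauG ⟨q, by omega⟩ = tauG ⟨q + m, by omega⟩ * dword N m n h
  | 0, q, h, hq => absurd hq (by omega)
  | 1, q, h, hq => absurd hq (by omega)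
  | n + 2, q, h, hq => by
    rcases Nat.lt_or_ge (q + 2) (n + 2) with hlt | hge
    · simp only [dword]
      have hcomm : tauG (n := N) ⟨q, by omega⟩ * cword N (n + 1) m (by omega)
          = cword N (n + 1) m (by omega) * tauG ⟨q, by omega⟩ :=
        tauG_comm_cword N (n + 1) q m (by omega) (by omega) (Or.inl (by omega))
      have ih := dword_mul_tauG N m (n + 1) q (by omega) (by omega)
      simp only [dword] at ih
      rw [mul_assoc, ← hcomm, ← mul_assoc, ih]
      simp only [mul_assoc]
    · have hqn : q = n := by omega
      subst hqn
      simp only [dword, mul_assoc]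
      have cc := cc_tauG N q m (by omega)
      rw [mul_assoc] at cc
      have hcomm : tauG (n := N) ⟨q + m, by omega⟩ * dword N m q (by omega)
          = dword N m q (by omega) * tauG ⟨q + m, by omega⟩ :=
        tauG_comm_dword N m (q + m) q (by omega) (by omega) (by omega)
      rw [cc, reassoc_comm hcomm.symm]

/-- Conjugation by the block transposition for `σ⁻¹`. -/
theorem dword_mul_sInvG (N m : ℕ) (n q : ℕ) (h : n + m ≤ N) (hq : q + 2 ≤ n) :
    dword N m n h * sInvG ⟨q, by omega⟩ = sInvG ⟨q + m, by omega⟩ * dword N m n h :=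
  conj_transfer (dword_mul_sG N m n q h hq) (sG_mul_sInvG _) (sInvG_mul_sG _)

/-- `d · sh_n(β) = sh_0(β) · d`: the transposition moves the upper block to the bottom. -/
theorem dword_mul_shiftHom (N m : ℕ) (β : SB m) :
    ∀ (n : ℕ) (h : n + m ≤ N) (h0 : 0 + m ≤ N),
      dword N m n h * shiftHom N n h β = shiftHom N 0 h0 β * dword N m n h
  | 0, h, h0 => by
    simp only [dword, one_mul, mul_one]
  | n + 1, h, h0 => by
    simp only [dword]
    have key : cword N n m (by omega) * shiftHom N (n + 1) h β
        = shiftHom N n (by omega) β * cword N n m (by omega) :=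
      (shiftHom_mul_cword (by omega) (by omega) (by omega) β).symm
    have ih := dword_mul_shiftHom N m β n (by omega) h0
    rw [mul_assoc, key, ← mul_assoc, ih]
    simp only [mul_assoc]

/-- `d · sh_0(α) = sh_m(α) · d`: the transposition moves the lower block to the top. -/
theorem dword_mul_incl (N m n : ℕ) (α : SB n) (h : n + m ≤ N) (h0 : 0 + n ≤ N)
    (hm : m + n ≤ N) :
    dword N m n h * shiftHom N 0 h0 α = shiftHom N m hm α * dword N m n h := by
  induction α using SB.ind with
  | h w =>
  induction w using FreeMonoid.recOn with
  | one => simp only [map_one, one_mul, mul_one]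
  | of_mul g w ih =>
    simp only [map_mul]
    rw [shiftHom_of, shiftHom_of]
    have hgen : dword N m n h * genE (shiftGen N 0 h0 g)
        = genE (shiftGen N m hm g) * dword N m n h := by
      cases g with
      | pos i =>
        have hi := i.isLt
        show dword N m n h * sG ⟨0 + ↑i, by omega⟩ = sG ⟨m + ↑i, by omega⟩ * _
        rw [sG_cast (show (0 : ℕ) + ↑i = ↑i by omega) (by omega) (by omega),
          sG_cast (show m + ↑i = ↑i + m by omega) (by omega) (by omega)]
        exact dword_mul_sG N m n ↑i h (by omega)
      | neg i =>
        have hi := i.isLt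
        show dword N m n h * sInvG ⟨0 + ↑i, by omega⟩ = sInvG ⟨m + ↑i, by omega⟩ * _
        rw [sInvG_cast (show (0 : ℕ) + ↑i = ↑i by omega) (by omega) (by omega),
          sInvG_cast (show m + ↑i = ↑i + m by omega) (by omega) (by omega)]
        exact dword_mul_sInvG N m n ↑i h (by omega)
      | tau i =>
        have hi := i.isLt
        show dword N m n h * tauG ⟨0 + ↑i, by omega⟩ = tauG ⟨m + ↑i, by omega⟩ * _
        rw [tauG_cast (show (0 : ℕ) + ↑i = ↑i by omega) (by omega) (by omega),
          tauG_cast (show m + ↑i = ↑i + m by omega) (by omega) (by omega)]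
        exact dword_mul_tauG N m n ↑i h (by omega)
    rw [← mul_assoc, hgen, mul_assoc, ih, ← mul_assoc]

/-! ### Hecke-level and `H_z`-level shift homomorphisms -/

/-- The algebra homomorphism `H(SB_n) → H(SB_N)` induced by `shiftHom`. -/
def heckeShift {n : ℕ} (N k : ℕ) (h : k + n ≤ N) : Hecke n →ₐ[Kq] Hecke N :=
  RingQuot.liftAlgHom Kq
    ⟨((RingQuot.mkAlgHom Kq (HeckeRel N)).comp
        (MonoidAlgebra.mapDomainAlgHom Kq Kq (shiftHom N k h))),
      by
        rintro x y ⟨i, rfl, rfl⟩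
        have hi := i.2
        set i' : Fin (N - 1) := ⟨k + i.1, by omega⟩ with hi'
        have hgen : (MonoidAlgebra.mapDomainAlgHom Kq Kq (shiftHom N k h))
            (MonoidAlgebra.of Kq (SB n) (sG i)) = MonoidAlgebra.of Kq (SB N) (sG i') := by
          rw [MonoidAlgebra.of_apply, MonoidAlgebra.mapDomainAlgHom_apply,
            MonoidAlgebra.mapDomain_single, shiftHom_sG, MonoidAlgebra.of_apply]
        have hrel : HeckeRel N (MonoidAlgebra.of Kq (SB N) (sG i') ^ 2)
            ((qK - 1) • MonoidAlgebra.of Kq (SB N) (sG i') + qK • 1) := ⟨i', rfl, rfl⟩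
        have hmk := RingQuot.mkAlgHom_rel Kq hrel
        simp only [map_pow, map_add, map_smul, map_one] at hmk
        simp only [AlgHom.coe_comp, Function.comp_apply, map_pow, map_add, map_smul, map_one,
          hgen]
        exact hmk⟩

theorem heckeOf_mul {n : ℕ} (x y : SB n) : heckeOf (x * y) = heckeOf x * heckeOf y := by
  simp only [heckeOf, map_mul]

theorem heckeOf_one {n : ℕ} : heckeOf (1 : SB n) = 1 := by
  simp only [heckeOf, map_one]

theorem heckeShift_heckeOf {n : ℕ} (N k : ℕ) (h : k + n ≤ N) (β : SB n) :
    heckeShift N k h (heckeOf β) = heckeOf (shiftHom N k h β) := by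
  simp only [heckeShift, heckeOf, RingQuot.liftAlgHom_mkAlgHom_apply, AlgHom.coe_comp,
    Function.comp_apply, MonoidAlgebra.of_apply, MonoidAlgebra.mapDomainAlgHom_apply,
    MonoidAlgebra.mapDomain_single]

/-- The algebra homomorphism `H_z(SB_n) → H_z(SB_N)` induced by `shiftHom`. -/
def hzShift {n : ℕ} (N k : ℕ) (h : k + n ≤ N) : HeckeZ n →ₐ[Lqz] HeckeZ N :=
  Algebra.TensorProduct.map (AlgHom.id Lqz Lqz) (heckeShift N k h)

theorem hzShift_ofHZ {n : ℕ} (N k : ℕ) (h : k + n ≤ N) (β : SB n) :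
    hzShift N k h (ofHZ β) = ofHZ (shiftHom N k h β) := by
  simp only [hzShift, ofHZ, Algebra.TensorProduct.map_tmul, AlgHom.coe_id, id_eq,
    heckeShift_heckeOf]

theorem ofHZ_mul {n : ℕ} (x y : SB n) : ofHZ (x * y) = ofHZ x * ofHZ y := by
  simp only [ofHZ, heckeOf_mul, Algebra.TensorProduct.tmul_mul_tmul, one_mul]

theorem ofHZ_one {n : ℕ} : ofHZ (1 : SB n) = 1 := by
  simp only [ofHZ, heckeOf_one, Algebra.TensorProduct.one_def]

theorem span_ofHZ (n : ℕ) : Submodule.span Lqz (Set.range (ofHZ (n := n))) = ⊤ := by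
  rw [eq_top_iff]
  rintro x -
  refine TensorProduct.induction_on x (zero_mem _) ?_ fun a b ha hb => add_mem ha hb
  intro l hk
  obtain ⟨y, rfl⟩ := RingQuot.mkAlgHom_surjective Kq (HeckeRel n) hk
  induction y using MonoidAlgebra.induction_linear with
  | zero => simp only [map_zero, TensorProduct.tmul_zero]; exact zero_mem _
  | add f g hf hg =>
    rw [map_add, TensorProduct.tmul_add]
    exact add_mem hf hg
  | single g c =>
    have hsing : (MonoidAlgebra.single g c : MonoidAlgebra Kq (SB n)) = c • MonoidAlgebra.of Kq (SB n) g := by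
      rw [MonoidAlgebra.of_apply, MonoidAlgebra.smul_single, smul_eq_mul, mul_one]
    rw [hsing, map_smul, ← TensorProduct.smul_tmul]
    have : (c • l) ⊗ₜ[Kq] (RingQuot.mkAlgHom Kq (HeckeRel n)) (MonoidAlgebra.of Kq (SB n) g)
        = (c • l) • ofHZ g := by
      rw [ofHZ, heckeOf, TensorProduct.smul_tmul', smul_eq_mul, mul_one]
    rw [this]
    exact Submodule.smul_mem _ (c • l) (Submodule.subset_span ⟨g, rfl⟩)

/-- Extensionality from the braid classes: two `ℂ(q,z)`-linear maps on `H_z(SB_n)` agreeing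
on all classes of braids are equal. -/
theorem hz_ext {n : ℕ} {M : Type*} [AddCommMonoid M] [Module Lqz M]
    {f g : HeckeZ n →ₗ[Lqz] M} (h : ∀ β : SB n, f (ofHZ β) = g (ofHZ β)) : f = g :=
  LinearMap.ext_on (span_ofHZ n) (by rintro x ⟨β, rfl⟩; exact h β)

/-- Generic extension by linearity of a two-sided multiplicative relation. -/
theorem hz_mul_ext {n N : ℕ} (u v : HeckeZ N) (F G : HeckeZ n →ₐ[Lqz] HeckeZ N)
    (h : ∀ β : SB n, u * F (ofHZ β) = G (ofHZ β) * v) (a : HeckeZ n) :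
    u * F a = G a * v := by
  have := hz_ext (f := (LinearMap.mulLeft Lqz u).comp F.toLinearMap)
    (g := (LinearMap.mulRight Lqz v).comp G.toLinearMap) (by
      intro β
      simpa only [LinearMap.coe_comp, Function.comp_apply, AlgHom.toLinearMap_apply,
        LinearMap.mulLeft_apply, LinearMap.mulRight_apply] using h β)
  simpa only [LinearMap.coe_comp, Function.comp_apply, AlgHom.toLinearMap_apply,
    LinearMap.mulLeft_apply, LinearMap.mulRight_apply] using LinearMap.congr_fun this a

/-- Separated blocks commute in `H_z(SB_N)`. -/
theorem hzShift_comm {n₁ n₂ N k₁ k₂ : ℕ} (h₁ : k₁ + n₁ ≤ N) (h₂ : k₂ + n₂ ≤ N)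
    (sep : k₁ + n₁ ≤ k₂) (a : HeckeZ n₁) (b : HeckeZ n₂) :
    hzShift N k₁ h₁ a * hzShift N k₂ h₂ b = hzShift N k₂ h₂ b * hzShift N k₁ h₁ a := by
  have key : ∀ (α : SB n₁) (b : HeckeZ n₂),
      hzShift N k₁ h₁ (ofHZ α) * hzShift N k₂ h₂ b
        = hzShift N k₂ h₂ b * hzShift N k₁ h₁ (ofHZ α) := by
    intro α b
    refine hz_mul_ext _ _ _ _ (fun β => ?_) b
    rw [hzShift_ofHZ, hzShift_ofHZ, ← ofHZ_mul, ← ofHZ_mul,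
      shiftHom_comm h₁ h₂ sep α β]
  have := hz_mul_ext (hzShift N k₂ h₂ b) (hzShift N k₂ h₂ b) (hzShift N k₁ h₁)
    (hzShift N k₁ h₁) (fun α => (key α b).symm) a
  exact this.symm

/-- Composition of `H_z`-level shift homomorphisms. -/
theorem hzShift_comp {m M N k k' : ℕ} (hM : k' + m ≤ M) (hN : k + M ≤ N) (hT : k + k' + m ≤ N)
    (a : HeckeZ m) :
    hzShift N k hN (hzShift M k' hM a) = hzShift N (k + k') hT a := by
  have := hz_ext (f := (hzShift N k hN).toLinearMap.comp (hzShift M k' hM).toLinearMap)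
    (g := (hzShift N (k + k') hT).toLinearMap) (by
      intro β
      simp only [LinearMap.coe_comp, Function.comp_apply, AlgHom.toLinearMap_apply,
        hzShift_ofHZ]
      rw [shiftHom_comp])
  simpa using LinearMap.congr_fun this a

/-- `ι_n` agrees with the shift by `0`. -/
theorem iotaHZ_eq {n : ℕ} (h : 0 + n ≤ n + 1) (a : HeckeZ n) :
    iotaHZ n a = hzShift (n + 1) 0 h a := by
  have hIncl : ∀ β : SB n, iotaHZ n (ofHZ β) = ofHZ (inclSB (n + 1) (Nat.le_succ n) β) := by
    intro β
    simp only [iotaHZ, ofHZ, Algebra.TensorProduct.map_tmul, AlgHom.coe_id, id_eq, heckeIncl,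
      heckeOf, RingQuot.liftAlgHom_mkAlgHom_apply, AlgHom.coe_comp, Function.comp_apply,
      MonoidAlgebra.of_apply, MonoidAlgebra.mapDomainAlgHom_apply, MonoidAlgebra.mapDomain_single]
  have := hz_ext (f := (iotaHZ n).toLinearMap) (g := (hzShift (n + 1) 0 h).toLinearMap) (by
    intro β
    simp only [AlgHom.toLinearMap_apply, hIncl β, hzShift_ofHZ]
    rfl)
  simpa using LinearMap.congr_fun this a

/-! ### Markov module lemmas -/

theorem markovClass_add (m : ℕ) (hm : 0 < m) (a b : HeckeZ m) :
    markovClass m hm (a + b) = markovClass m hm a + markovClass m hm b := by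
  unfold markovClass
  rw [map_add, Submodule.Quotient.mk_add]

theorem markovClass_smul (m : ℕ) (hm : 0 < m) (c : Lqz) (a : HeckeZ m) :
    markovClass m hm (c • a) = c • markovClass m hm a := by
  unfold markovClass
  rw [map_smul, Submodule.Quotient.mk_smul]

theorem markovClass_zero (m : ℕ) (hm : 0 < m) : markovClass m hm 0 = 0 := by
  unfold markovClass
  rw [map_zero, Submodule.Quotient.mk_eq_zero]
  exact zero_mem _

/-- The trace relation. -/
theorem markov_trace (m : ℕ) (hm : 0 < m) (a b : HeckeZ m) :
    markovClass m hm (a * b) = markovClass m hm (b * a) := by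
  unfold markovClass
  refine (Submodule.Quotient.eq _).2 ?_
  exact Submodule.subset_span (Or.inl (Or.inl ⟨⟨m, hm⟩, a, b, rfl⟩))

/-- The stabilization relation. -/
theorem markov_stab (m : ℕ) (hm : 0 < m) (a : HeckeZ m) :
    markovClass m hm a = markovClass (m + 1) (Nat.succ_pos m) (iotaHZ m a) := by
  unfold markovClass
  refine (Submodule.Quotient.eq _).2 ?_
  exact Submodule.subset_span (Or.inl (Or.inr ⟨⟨m, hm⟩, a, rfl⟩))

/-- The positive Markov relation. -/
theorem markov_pos (m : ℕ) (hm : 0 < m) (a : HeckeZ m) :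
    markovClass (m + 1) (Nat.succ_pos m) (iotaHZ m a * ofHZ (sigmaLast ⟨m, hm⟩))
      = zL • markovClass m hm a := by
  unfold markovClass
  rw [← Submodule.Quotient.mk_smul]
  refine (Submodule.Quotient.eq _).2 ?_
  exact Submodule.subset_span (Or.inr ⟨⟨m, hm⟩, a, rfl⟩)

/-- Invariance of the Markov class under conjugation. -/
theorem markov_conj (m : ℕ) (hm : 0 < m) (u v x : HeckeZ m) (huv : v * u = 1) :
    markovClass m hm (u * (x * v)) = markovClass m hm x := by
  rw [markov_trace m hm u (x * v), mul_assoc, huv, mul_one]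

/-! ### The bilinear product -/

/-- The bilinear map `(a, b) ↦ [incl(a) · sh(b)]` on single summands. -/
def TT (i j : Idx) : HeckeZ i.1 →ₗ[Lqz] HeckeZ j.1 →ₗ[Lqz] Markov :=
  LinearMap.mk₂ Lqz
    (fun a b => markovClass (i.1 + j.1) (Nat.add_pos_left i.2 j.1)
      (hzShift (i.1 + j.1) 0 (by omega) a * hzShift (i.1 + j.1) i.1 le_rfl b))
    (fun a a' b => by rw [map_add, add_mul, markovClass_add])
    (fun c a b => by rw [map_smul, smul_mul_assoc, markovClass_smul])
    (fun a b b' => by rw [map_add, mul_add, markovClass_add])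
    (fun c a b => by rw [map_smul, mul_smul_comm, markovClass_smul])

theorem TT_apply (i j : Idx) (a : HeckeZ i.1) (b : HeckeZ j.1) :
    TT i j a b = markovClass (i.1 + j.1) (Nat.add_pos_left i.2 j.1)
      (hzShift (i.1 + j.1) 0 (by omega) a * hzShift (i.1 + j.1) i.1 le_rfl b) := rfl

theorem hzShift_congr {n N k k' : ℕ} (e : k = k') (h : k + n ≤ N) (h' : k' + n ≤ N)
    (a : HeckeZ n) : hzShift N k h a = hzShift N k' h' a := by subst e; rfl

theorem hzShift_iota {n N k : ℕ} (h : k + (n + 1) ≤ N) (h' : k + n ≤ N) (a : HeckeZ n) :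
    hzShift N k h (iotaHZ n a) = hzShift N k h' a := by
  rw [iotaHZ_eq (by omega)]
  rw [hzShift_comp (by omega) h (by omega) a]
  exact hzShift_congr (by omega) _ _ a

theorem pair_cast {n m : ℕ} (N N' : ℕ) (e : N = N') (hN : 0 < N) (hN' : 0 < N') (k : ℕ)
    (h1 : 0 + n ≤ N) (h1' : 0 + n ≤ N') (h2 : k + m ≤ N) (h2' : k + m ≤ N')
    (a : HeckeZ n) (b : HeckeZ m) :
    markovClass N hN (hzShift N 0 h1 a * hzShift N k h2 b)
      = markovClass N' hN' (hzShift N' 0 h1' a * hzShift N' k h2' b) := by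
  subst e; rfl

/-- The heart of commutativity: conjugation by the block transposition braid. -/
theorem comm_core (n m N : ℕ) (hN : 0 < N) (e : n + m = N)
    (h1 : 0 + n ≤ N) (h2 : n + m ≤ N) (h3 : 0 + m ≤ N) (h4 : m + n ≤ N)
    (a : HeckeZ n) (b : HeckeZ m) :
    markovClass N hN (hzShift N 0 h1 a * hzShift N n h2 b)
      = markovClass N hN (hzShift N 0 h3 b * hzShift N m h4 a) := by
  set D : HeckeZ N := ofHZ (dword N m n h2) with hD
  set D' : HeckeZ N := ofHZ (dwordInv N m n h2) with hD'
  have hDD' : D * D' = 1 := by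
    rw [hD, hD', ← ofHZ_mul, dword_mul_dwordInv, ofHZ_one]
  have hD'D : D' * D = 1 := by
    rw [hD, hD', ← ofHZ_mul, dwordInv_mul_dword, ofHZ_one]
  have hd1 : ∀ y : HeckeZ m, D * hzShift N n h2 y = hzShift N 0 h3 y * D :=
    hz_mul_ext D D _ _ (fun β => by
      rw [hzShift_ofHZ, hzShift_ofHZ, hD, ← ofHZ_mul, ← ofHZ_mul,
        dword_mul_shiftHom N m β n h2 h3])
  have hd2 : ∀ x : HeckeZ n, D * hzShift N 0 h1 x = hzShift N m h4 x * D :=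
    hz_mul_ext D D _ _ (fun β => by
      rw [hzShift_ofHZ, hzShift_ofHZ, hD, ← ofHZ_mul, ← ofHZ_mul,
        dword_mul_incl N m n β h2 h1 h4])
  have key : D * (hzShift N 0 h1 a * hzShift N n h2 b * D')
      = hzShift N 0 h3 b * hzShift N m h4 a := by
    calc D * (hzShift N 0 h1 a * hzShift N n h2 b * D')
        = (D * hzShift N 0 h1 a) * hzShift N n h2 b * D' := by simp only [mul_assoc]
      _ = (hzShift N m h4 a * D) * hzShift N n h2 b * D' := by rw [hd2]
      _ = hzShift N m h4 a * (D * hzShift N n h2 b) * D' := by simp only [mul_assoc]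
      _ = hzShift N m h4 a * (hzShift N 0 h3 b * D) * D' := by rw [hd1]
      _ = hzShift N m h4 a * hzShift N 0 h3 b * (D * D') := by simp only [mul_assoc]
      _ = hzShift N m h4 a * hzShift N 0 h3 b := by rw [hDD', mul_one]
      _ = hzShift N 0 h3 b * hzShift N m h4 a := by
          rw [hzShift_comm h3 h4 (by omega) b a]
  calc markovClass N hN (hzShift N 0 h1 a * hzShift N n h2 b)
      = markovClass N hN (D * (hzShift N 0 h1 a * hzShift N n h2 b * D')) :=
        (markov_conj N hN D D' _ hD'D).symm
    _ = markovClass N hN (hzShift N 0 h3 b * hzShift N m h4 a) := by rw [key]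

theorem TT_comm (i j : Idx) (a : HeckeZ i.1) (b : HeckeZ j.1) : TT i j a b = TT j i b a := by
  rw [TT_apply, TT_apply]
  rw [comm_core i.1 j.1 (i.1 + j.1) (Nat.add_pos_left i.2 j.1) rfl _ _ (by omega) (by omega) a b]
  exact pair_cast (i.1 + j.1) (j.1 + i.1) (by omega) _ _ j.1 _ _ _ _ b a

theorem stab_core (n m : ℕ) (hn : 0 < n) (hm : 0 < m)
    (h1 : 0 + n ≤ n + m) (h2 : n + m ≤ n + m)
    (h1' : 0 + n ≤ n + m + 1) (h2' : n + (m + 1) ≤ n + m + 1)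
    (a : HeckeZ n) (b : HeckeZ m) :
    markovClass (n + m) (Nat.add_pos_left hn m) (hzShift (n + m) 0 h1 a * hzShift (n + m) n h2 b)
      = markovClass (n + m + 1) (Nat.add_pos_left hn (m + 1))
          (hzShift (n + m + 1) 0 h1' a * hzShift (n + m + 1) n h2' (iotaHZ m b)) := by
  have e1 : hzShift (n + m + 1) 0 h1' a = iotaHZ (n + m) (hzShift (n + m) 0 h1 a) := by
    rw [iotaHZ_eq (by omega), hzShift_comp (by omega) (by omega) (by omega) a]
  have e2 : hzShift (n + m + 1) n h2' (iotaHZ m b) = iotaHZ (n + m) (hzShift (n + m) n h2 b) := by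
    rw [hzShift_iota _ (by omega), iotaHZ_eq (by omega),
      hzShift_comp (by omega) (by omega) (by omega) b]
    exact hzShift_congr (by omega) _ _ b
  rw [e1, e2, ← map_mul]
  exact markov_stab (n + m) (Nat.add_pos_left hn m) _

theorem TT_stab (i j : Idx) (a : HeckeZ i.1) (b : HeckeZ j.1) :
    TT i j a b = TT i (succI j) a (iotaHZ j.1 b) := by
  exact stab_core i.1 j.1 i.2 j.2 (by omega) le_rfl (by omega) (by omega) a b

theorem pos_core (n m : ℕ) (hn : 0 < n) (hm : 0 < m)
    (h1 : 0 + n ≤ n + m) (h2 : n + m ≤ n + m)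
    (h1' : 0 + n ≤ n + m + 1) (h2' : n + (m + 1) ≤ n + m + 1)
    (a : HeckeZ n) (b : HeckeZ m) :
    markovClass (n + m + 1) (Nat.add_pos_left hn (m + 1))
        (hzShift (n + m + 1) 0 h1' a *
          hzShift (n + m + 1) n h2' (iotaHZ m b * ofHZ (sigmaLast ⟨m, hm⟩)))
      = zL • markovClass (n + m) (Nat.add_pos_left hn m)
          (hzShift (n + m) 0 h1 a * hzShift (n + m) n h2 b) := by
  set N := n + m with hNdef
  have hNpos : 0 < N := Nat.add_pos_left hn m
  have e1 : hzShift (N + 1) 0 h1' a = iotaHZ N (hzShift N 0 h1 a) := by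
    rw [iotaHZ_eq (by omega), hzShift_comp (by omega) (by omega) (by omega) a]
  have e2 : hzShift (N + 1) n (by omega : n + (m + 1) ≤ N + 1) (iotaHZ m b)
      = iotaHZ N (hzShift N n h2 b) := by
    rw [hzShift_iota _ (by omega), iotaHZ_eq (by omega),
      hzShift_comp (by omega) (by omega) (by omega) b]
    exact hzShift_congr (by omega) _ _ b
  have eS : hzShift (N + 1) n h2' (ofHZ (sigmaLast ⟨m, hm⟩))
      = ofHZ (sigmaLast ⟨N, hNpos⟩) := by
    rw [hzShift_ofHZ]
    show ofHZ (shiftHom (N + 1) n h2' (sG ⟨m - 1, _⟩)) = ofHZ (sG ⟨N - 1, _⟩)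
    rw [shiftHom_sG]
    refine congrArg ofHZ (sG_cast ?_ _ _)
    show n + (m - 1) = N - 1
    omega
  have expand : hzShift (N + 1) 0 h1' a *
        hzShift (N + 1) n h2' (iotaHZ m b * ofHZ (sigmaLast ⟨m, hm⟩))
      = iotaHZ N (hzShift N 0 h1 a * hzShift N n h2 b) * ofHZ (sigmaLast ⟨N, hNpos⟩) := by
    rw [map_mul, eS, e1, map_mul]
    rw [show hzShift (N + 1) n h2' (iotaHZ m b) = iotaHZ N (hzShift N n h2 b) from e2]
    rw [mul_assoc]
  rw [expand]
  exact markov_pos N hNpos _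

theorem TT_pos (i j : Idx) (a : HeckeZ i.1) (b : HeckeZ j.1) :
    TT i (succI j) a (iotaHZ j.1 b * ofHZ (sigmaLast j)) = zL • TT i j a b := by
  exact pos_core i.1 j.1 i.2 j.2 (by omega) le_rfl (by omega) (by omega) a b

theorem TT_trace_left (i j : Idx) (a₁ a₂ : HeckeZ i.1) (b : HeckeZ j.1) :
    TT i j (a₁ * a₂) b = TT i j (a₂ * a₁) b := by
  rw [TT_apply, TT_apply, map_mul, map_mul]
  calc markovClass (i.1 + j.1) (Nat.add_pos_left i.2 j.1)
        (hzShift (i.1 + j.1) 0 (by omega) a₁ * hzShift (i.1 + j.1) 0 (by omega) a₂ *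
          hzShift (i.1 + j.1) i.1 le_rfl b)
      = markovClass (i.1 + j.1) (Nat.add_pos_left i.2 j.1)
          (hzShift (i.1 + j.1) 0 (by omega) a₁ * (hzShift (i.1 + j.1) 0 (by omega) a₂ *
            hzShift (i.1 + j.1) i.1 le_rfl b)) := by rw [mul_assoc]
    _ = markovClass (i.1 + j.1) (Nat.add_pos_left i.2 j.1)
          ((hzShift (i.1 + j.1) 0 (by omega) a₂ * hzShift (i.1 + j.1) i.1 le_rfl b) *
            hzShift (i.1 + j.1) 0 (by omega) a₁) := markov_trace _ _ _ _
    _ = markovClass (i.1 + j.1) (Nat.add_pos_left i.2 j.1)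
          (hzShift (i.1 + j.1) 0 (by omega) a₂ * (hzShift (i.1 + j.1) i.1 le_rfl b *
            hzShift (i.1 + j.1) 0 (by omega) a₁)) := by rw [mul_assoc]
    _ = markovClass (i.1 + j.1) (Nat.add_pos_left i.2 j.1)
          (hzShift (i.1 + j.1) 0 (by omega) a₂ * (hzShift (i.1 + j.1) 0 (by omega) a₁ *
            hzShift (i.1 + j.1) i.1 le_rfl b)) := by
        rw [← hzShift_comm (by omega) le_rfl (by omega) a₁ b]
    _ = markovClass (i.1 + j.1) (Nat.add_pos_left i.2 j.1)
          (hzShift (i.1 + j.1) 0 (by omega) a₂ * hzShift (i.1 + j.1) 0 (by omega) a₁ *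
            hzShift (i.1 + j.1) i.1 le_rfl b) := by rw [mul_assoc]

theorem TT_trace_right (i j : Idx) (a : HeckeZ i.1) (b₁ b₂ : HeckeZ j.1) :
    TT i j a (b₁ * b₂) = TT i j a (b₂ * b₁) := by
  rw [TT_apply, TT_apply, map_mul, map_mul]
  calc markovClass (i.1 + j.1) (Nat.add_pos_left i.2 j.1)
        (hzShift (i.1 + j.1) 0 (by omega) a *
          (hzShift (i.1 + j.1) i.1 le_rfl b₁ * hzShift (i.1 + j.1) i.1 le_rfl b₂))
      = markovClass (i.1 + j.1) (Nat.add_pos_left i.2 j.1)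
          ((hzShift (i.1 + j.1) 0 (by omega) a * hzShift (i.1 + j.1) i.1 le_rfl b₁) *
            hzShift (i.1 + j.1) i.1 le_rfl b₂) := by rw [mul_assoc]
    _ = markovClass (i.1 + j.1) (Nat.add_pos_left i.2 j.1)
          (hzShift (i.1 + j.1) i.1 le_rfl b₂ *
            (hzShift (i.1 + j.1) 0 (by omega) a * hzShift (i.1 + j.1) i.1 le_rfl b₁)) :=
        markov_trace _ _ _ _
    _ = markovClass (i.1 + j.1) (Nat.add_pos_left i.2 j.1)
          ((hzShift (i.1 + j.1) i.1 le_rfl b₂ * hzShift (i.1 + j.1) 0 (by omega) a) *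
            hzShift (i.1 + j.1) i.1 le_rfl b₁) := by rw [mul_assoc]
    _ = markovClass (i.1 + j.1) (Nat.add_pos_left i.2 j.1)
          ((hzShift (i.1 + j.1) 0 (by omega) a * hzShift (i.1 + j.1) i.1 le_rfl b₂) *
            hzShift (i.1 + j.1) i.1 le_rfl b₁) := by
        rw [← hzShift_comm (by omega) le_rfl (by omega) a b₂]
    _ = markovClass (i.1 + j.1) (Nat.add_pos_left i.2 j.1)
          (hzShift (i.1 + j.1) 0 (by omega) a *
            (hzShift (i.1 + j.1) i.1 le_rfl b₂ * hzShift (i.1 + j.1) i.1 le_rfl b₁)) := by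
        rw [mul_assoc]

theorem TT_stab_left (i j : Idx) (a : HeckeZ i.1) (c : HeckeZ j.1) :
    TT i j a c = TT (succI i) j (iotaHZ i.1 a) c := by
  exact (TT_comm _ _ _ _).trans ((TT_stab _ _ _ _).trans (TT_comm _ _ _ _))

theorem TT_pos_left (i j : Idx) (a : HeckeZ i.1) (c : HeckeZ j.1) :
    TT (succI i) j (iotaHZ i.1 a * ofHZ (sigmaLast i)) c = zL • TT i j a c := by
  exact (TT_comm _ _ _ _).trans ((TT_pos _ _ _ _).trans (congrArg (zL • ·) (TT_comm _ _ _ _)))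

/-! ### The bilinear product on the Markov module -/

def Binner (i : Idx) : HeckeZ i.1 →ₗ[Lqz] MV →ₗ[Lqz] Markov where
  toFun a := DirectSum.toModule Lqz Idx Markov fun j => TT i j a
  map_add' a a' := by
    refine DirectSum.linearMap_ext Lqz fun j => ?_
    ext c
    simp only [LinearMap.comp_apply, LinearMap.add_apply, DirectSum.toModule_lof, map_add]
  map_smul' c a := by
    refine DirectSum.linearMap_ext Lqz fun j => ?_
    ext x
    simp only [LinearMap.comp_apply, LinearMap.smul_apply, DirectSum.toModule_lof, map_smul,
      RingHom.id_apply]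

def Bmap : MV →ₗ[Lqz] MV →ₗ[Lqz] Markov :=
  DirectSum.toModule Lqz Idx _ fun i => Binner i

theorem Bmap_lof_lof (i j : Idx) (a : HeckeZ i.1) (b : HeckeZ j.1) :
    Bmap (mvof i a) (mvof j b) = TT i j a b := by
  unfold Bmap mvof
  rw [DirectSum.toModule_lof]
  show DirectSum.toModule Lqz Idx Markov (fun j => TT i j a) (DirectSum.lof Lqz Idx _ j b)
    = TT i j a b
  rw [DirectSum.toModule_lof]



theorem Bmap_left_vanish : ∀ r ∈ markovRels, Bmap r = 0 := by
  rintro r hr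
  rcases hr with (⟨i, a, b, rfl⟩ | ⟨i, a, rfl⟩) | ⟨i, a, rfl⟩
  · rw [map_sub]
    have h : Bmap (mvof i (a * b)) = Bmap (mvof i (b * a)) := by
      refine DirectSum.linearMap_ext Lqz fun j => ?_
      ext c
      show Bmap (mvof i (a * b)) (mvof j c) = Bmap (mvof i (b * a)) (mvof j c)
      rw [Bmap_lof_lof, Bmap_lof_lof, TT_trace_left]
    rw [h, sub_self]
  · rw [map_sub]
    have h : Bmap (mvof i a) = Bmap (mvof (succI i) (iotaHZ i.1 a)) := by
      refine DirectSum.linearMap_ext Lqz fun j => ?_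
      ext c
      show Bmap (mvof i a) (mvof j c) = Bmap (mvof (succI i) (iotaHZ i.1 a)) (mvof j c)
      exact (Bmap_lof_lof _ _ _ _).trans ((TT_stab_left _ _ _ _).trans (Bmap_lof_lof _ _ _ _).symm)
    rw [h, sub_self]
  · rw [map_sub, map_smul]
    have h : Bmap (mvof (succI i) (iotaHZ i.1 a * ofHZ (sigmaLast i)))
        = zL • Bmap (mvof i a) := by
      refine DirectSum.linearMap_ext Lqz fun j => ?_
      ext c
      show Bmap (mvof (succI i) (iotaHZ i.1 a * ofHZ (sigmaLast i))) (mvof j c)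
        = (zL • Bmap (mvof i a)) (mvof j c)
      exact (Bmap_lof_lof _ _ _ _).trans ((TT_pos_left _ _ _ _).trans (by rw [LinearMap.smul_apply, Bmap_lof_lof]))
    rw [h, sub_self]

theorem span_le_ker : Submodule.span Lqz markovRels ≤ LinearMap.ker Bmap := by
  rw [Submodule.span_le]
  intro r hr
  rw [SetLike.mem_coe, LinearMap.mem_ker]
  exact Bmap_left_vanish r hr

def mulAux1 : Markov →ₗ[Lqz] MV →ₗ[Lqz] Markov := Submodule.liftQ _ Bmap span_le_ker

theorem Bmap_right_vanish : ∀ r ∈ markovRels, Bmap.flip r = 0 := by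
  rintro r hr
  rcases hr with (⟨i, a, b, rfl⟩ | ⟨i, a, rfl⟩) | ⟨i, a, rfl⟩
  · rw [map_sub]
    have h : Bmap.flip (mvof i (a * b)) = Bmap.flip (mvof i (b * a)) := by
      refine DirectSum.linearMap_ext Lqz fun j => ?_
      ext c
      show Bmap (mvof j c) (mvof i (a * b)) = Bmap (mvof j c) (mvof i (b * a))
      rw [Bmap_lof_lof, Bmap_lof_lof, TT_trace_right]
    rw [h, sub_self]
  · rw [map_sub]
    have h : Bmap.flip (mvof i a) = Bmap.flip (mvof (succI i) (iotaHZ i.1 a)) := by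
      refine DirectSum.linearMap_ext Lqz fun j => ?_
      ext c
      show Bmap (mvof j c) (mvof i a) = Bmap (mvof j c) (mvof (succI i) (iotaHZ i.1 a))
      exact (Bmap_lof_lof _ _ _ _).trans ((TT_stab _ _ _ _).trans (Bmap_lof_lof _ _ _ _).symm)
    rw [h, sub_self]
  · rw [map_sub, map_smul]
    have h : Bmap.flip (mvof (succI i) (iotaHZ i.1 a * ofHZ (sigmaLast i)))
        = zL • Bmap.flip (mvof i a) := by
      refine DirectSum.linearMap_ext Lqz fun j => ?_
      ext c
      show Bmap (mvof j c) (mvof (succI i) (iotaHZ i.1 a * ofHZ (sigmaLast i)))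
        = (zL • Bmap.flip (mvof i a)) (mvof j c)
      refine (Bmap_lof_lof _ _ _ _).trans ?_; rw [LinearMap.smul_apply]
      show _ = zL • Bmap (mvof j c) (mvof i a)
      exact (TT_pos _ _ _ _).trans (congrArg (zL • ·) (Bmap_lof_lof _ _ _ _).symm)
    rw [h, sub_self]

theorem span_le_ker_flip : Submodule.span Lqz markovRels ≤ LinearMap.ker mulAux1.flip := by
  rw [Submodule.span_le]
  intro r hr
  rw [SetLike.mem_coe, LinearMap.mem_ker]
  refine Submodule.linearMap_qext _ (LinearMap.ext fun x => ?_)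
  show mulAux1 (Submodule.Quotient.mk x) r = (0 : Markov)
  rw [mulAux1, Submodule.liftQ_apply]
  exact LinearMap.congr_fun (Bmap_right_vanish r hr) x

/-- The bilinear product on the Markov module. -/
def mulM : Markov →ₗ[Lqz] Markov →ₗ[Lqz] Markov :=
  (Submodule.liftQ _ mulAux1.flip span_le_ker_flip).flip

theorem mulM_class (n m : ℕ) (hn : 0 < n) (hm : 0 < m) (a : HeckeZ n) (b : HeckeZ m) :
    mulM (markovClass n hn a) (markovClass m hm b) = TT ⟨n, hn⟩ ⟨m, hm⟩ a b := by
  show (Submodule.liftQ _ mulAux1.flip span_le_ker_flip)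
    (Submodule.Quotient.mk (mvof ⟨m, hm⟩ b)) (Submodule.Quotient.mk (mvof ⟨n, hn⟩ a)) = _
  rw [Submodule.liftQ_apply]
  show mulAux1 (Submodule.Quotient.mk (mvof ⟨n, hn⟩ a)) (mvof ⟨m, hm⟩ b) = _
  rw [mulAux1, Submodule.liftQ_apply, Bmap_lof_lof]

/-- Induction principle for the Markov module. -/
theorem markov_induction {P : Markov → Prop} (h0 : P 0)
    (hb : ∀ (m : ℕ) (hm : 0 < m) (a : HeckeZ m), P (markovClass m hm a))
    (hadd : ∀ x y, P x → P y → P (x + y)) (x : Markov) : P x := by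
  obtain ⟨v, rfl⟩ := Submodule.mkQ_surjective _ x
  induction v using DirectSum.induction_on with
  | zero => simpa using h0
  | of i a => exact hb i.1 i.2 a
  | add u v hu hv =>
    rw [map_add]
    exact hadd _ _ hu hv

theorem triple_cast {n m l : ℕ} (N N' : ℕ) (e : N = N') (hN : 0 < N) (hN' : 0 < N')
    (k k2 : ℕ) (h1 : 0 + n ≤ N) (h2 : k + m ≤ N) (h3 : k2 + l ≤ N)
    (h1' : 0 + n ≤ N') (h2' : k + m ≤ N') (h3' : k2 + l ≤ N')
    (a : HeckeZ n) (b : HeckeZ m) (c : HeckeZ l) :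
    markovClass N hN (hzShift N 0 h1 a * hzShift N k h2 b * hzShift N k2 h3 c)
      = markovClass N' hN' (hzShift N' 0 h1' a * hzShift N' k h2' b * hzShift N' k2 h3' c) := by
  subst e; rfl

theorem mulM_assoc_classes (n m l : ℕ) (hn : 0 < n) (hm : 0 < m) (hl : 0 < l)
    (a : HeckeZ n) (b : HeckeZ m) (c : HeckeZ l) :
    mulM (mulM (markovClass n hn a) (markovClass m hm b)) (markovClass l hl c)
      = mulM (markovClass n hn a) (mulM (markovClass m hm b) (markovClass l hl c)) := by
  rw [mulM_class, TT_apply, mulM_class, TT_apply, mulM_class, TT_apply, mulM_class, TT_apply]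
  have eA : hzShift (n + m + l) 0 (by omega)
        (hzShift (n + m) 0 (by omega) a * hzShift (n + m) n le_rfl b)
      = hzShift (n + m + l) 0 (by omega) a * hzShift (n + m + l) n (by omega) b := by
    rw [map_mul, hzShift_comp (by omega) (by omega) (by omega) a,
      hzShift_comp le_rfl (by omega) (by omega) b,
      hzShift_congr (show (0 : ℕ) + 0 = 0 by omega) (by omega) (by omega) a,
      hzShift_congr (show (0 : ℕ) + n = n by omega) (by omega) (by omega) b]
  have eB : hzShift (n + (m + l)) n le_rfl
        (hzShift (m + l) 0 (by omega) b * hzShift (m + l) m le_rfl c)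
      = hzShift (n + (m + l)) n (by omega) b * hzShift (n + (m + l)) (n + m) (by omega) c := by
    rw [map_mul, hzShift_comp (by omega) le_rfl (by omega) b,
      hzShift_comp le_rfl le_rfl (by omega) c,
      hzShift_congr (show n + 0 = n by omega) (by omega) (by omega) b]
  rw [eA, eB, ← mul_assoc]
  exact triple_cast (n + m + l) (n + (m + l)) (by omega) _ _ n (n + m)
    (by omega) (by omega) (by omega) (by omega) (by omega) (by omega) a b c

theorem mulM_comm (x y : Markov) : mulM x y = mulM y x := by
  have comm_cls : ∀ (n : ℕ) (hn : 0 < n) (a : HeckeZ n) (y : Markov),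
      mulM (markovClass n hn a) y = mulM y (markovClass n hn a) := by
    intro n hn a y
    induction y using markov_induction with
    | h0 => simp only [map_zero, LinearMap.zero_apply]
    | hb m hm b => rw [mulM_class, mulM_class]; exact TT_comm ⟨n, hn⟩ ⟨m, hm⟩ a b
    | hadd u v hu hv =>
      rw [map_add, map_add, LinearMap.add_apply, hu, hv]
  induction x using markov_induction with
  | h0 => simp only [map_zero, LinearMap.zero_apply]
  | hb n hn a => exact comm_cls n hn a y
  | hadd u v hu hv =>
    rw [map_add, map_add, LinearMap.add_apply, hu, hv]

theorem mulM_assoc (x y z : Markov) : mulM (mulM x y) z = mulM x (mulM y z) := by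
  have A1 : ∀ (n : ℕ) (hn : 0 < n) (a : HeckeZ n) (m : ℕ) (hm : 0 < m) (b : HeckeZ m)
      (z : Markov), mulM (mulM (markovClass n hn a) (markovClass m hm b)) z
        = mulM (markovClass n hn a) (mulM (markovClass m hm b) z) := by
    intro n hn a m hm b z
    induction z using markov_induction with
    | h0 => simp only [map_zero]
    | hb l hl c => exact mulM_assoc_classes n m l hn hm hl a b c
    | hadd u v hu hv => simp only [map_add, LinearMap.add_apply, hu, hv]
  have A2 : ∀ (n : ℕ) (hn : 0 < n) (a : HeckeZ n) (y z : Markov),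
      mulM (mulM (markovClass n hn a) y) z = mulM (markovClass n hn a) (mulM y z) := by
    intro n hn a y z
    induction y using markov_induction with
    | h0 => simp only [map_zero, LinearMap.zero_apply]
    | hb m hm b => exact A1 n hn a m hm b z
    | hadd u v hu hv => simp only [map_add, LinearMap.add_apply, hu, hv]
  induction x using markov_induction with
  | h0 => simp only [map_zero, LinearMap.zero_apply]
  | hb n hn a => exact A2 n hn a y z
  | hadd u v hu hv => simp only [map_add, LinearMap.add_apply, hu, hv]

theorem mulM_one_right (m : ℕ) (hm : 0 < m) (a : HeckeZ m) :
    mulM (markovClass m hm a) (braidClass 1 one_pos (1 : SB 1)) = markovClass m hm a := by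
  rw [braidClass, mulM_class, TT_apply]
  have e1 : hzShift (m + 1) m le_rfl (ofHZ (1 : SB 1)) = 1 := by
    rw [ofHZ_one, map_one]
  rw [e1, mul_one]
  have e2 : hzShift (m + 1) 0 (by omega) a = iotaHZ m a := (iotaHZ_eq (by omega) a).symm
  rw [e2]
  exact (markov_stab m hm a).symm

theorem mulM_one_left (x : Markov) :
    mulM (braidClass 1 one_pos (1 : SB 1)) x = x := by
  rw [mulM_comm]
  induction x using markov_induction with
  | h0 => simp only [map_zero, LinearMap.zero_apply]
  | hb m hm a => exact mulM_one_right m hm a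
  | hadd u v hu hv => simp only [map_add, LinearMap.add_apply, hu, hv]


/-- The bilinear operation on `Markov(⊔SB)` determined on classes of braids by
`[α,n]·[β,m] := [α ∗ β, n+m]`, extended `ℂ(q,z)`-bilinearly, is well defined, and it makes
`Markov(⊔SB)` an associative, commutative, unital `ℂ(q,z)`-algebra whose unit is the class
`[1,1]` of the trivial braid on one strand. -/
theorem markov_mul_well_defined :
    ∃ mul : Markov →ₗ[Lqz] Markov →ₗ[Lqz] Markov,
      (∀ (n m : ℕ) (hn : 0 < n) (hm : 0 < m) (α : SB n) (β : SB m),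
        mul (braidClass n hn α) (braidClass m hm β) =
          braidClass (n + m) (by omega) (starIn (n + m) le_rfl α β)) ∧
      (∀ x y z : Markov, mul (mul x y) z = mul x (mul y z)) ∧
      (∀ x y : Markov, mul x y = mul y x) ∧
      (∀ x : Markov, mul (braidClass 1 one_pos (1 : SB 1)) x = x) := by
  refine ⟨mulM, ?_, mulM_assoc, mulM_comm, mulM_one_left⟩
  intro n m hn hm α β
  rw [braidClass, braidClass, mulM_class, TT_apply, hzShift_ofHZ, hzShift_ofHZ, ← ofHZ_mul]
  rfl

end
end SingularHOMFLYPT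
end
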